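/- arXiv:1807.10489 — 8 statements merged into one kernel-verified Lean document; each statement's English description precedes it below -/
import Mathlib

section
/- Let K ≥ 3 be an integer and let w > √e be a real number. If Q is a random variable with the chi-squared distribution with K degrees of freedom, then the probability that Q lies outside the interval [K·w⁻², K·w²] is at most (√e/w)^K, i.e. P(Q < K·w⁻² or Q > K·w²) ≤ (√e/w)^K. -/
open MeasureTheory ProbabilityTheory Real

section AuxChiSq

open Set

private lemma aux_exp_neg_le_quadratic (u : ℝ) (hu : 0 ≤ u) :
    Real.exp (-u) ≤ 1 - u + u ^ 2 / 2 := by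
  have hmono : MonotoneOn (fun x : ℝ => 1 - x + x ^ 2 / 2 - Real.exp (-x)) (Set.Ici 0) := by
    apply monotoneOn_of_deriv_nonneg (convex_Ici _)
    · fun_prop
    · fun_prop
    · intro x hx
      rw [interior_Ici] at hx
      have hd : HasDerivAt (fun x : ℝ => 1 - x + x ^ 2 / 2 - Real.exp (-x))
          (-1 + x + Real.exp (-x)) x := by
        have h1 : HasDerivAt (fun x : ℝ => 1 - x + x ^ 2 / 2) (-1 + x) x := by
          have : HasDerivAt (fun x : ℝ => 1 - x + x ^ 2 / 2) (-1 + ↑2 * x ^ (2 - 1) / 2) x :=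
            ((hasDerivAt_id x).const_sub 1).add
            (((hasDerivAt_pow 2 x)).div_const 2)
          convert this using 1
          push_cast; ring
        have h2 : HasDerivAt (fun x : ℝ => Real.exp (-x)) (-Real.exp (-x)) x := by
          have hl : HasDerivAt (fun x : ℝ => -x) (-1 : ℝ) x := by
            exact hasDerivAt_neg x
          simpa using hl.exp
        have := h1.sub h2; rw [sub_neg_eq_add] at this; exact this
      rw [hd.deriv]
      have := Real.add_one_le_exp (-x)
      linarith
  have h0 := hmono (Set.self_mem_Ici) (by exact hu) hu
  simp at h0
  linarith

private lemma aux_antitone :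
    AntitoneOn (fun x : ℝ => x * Real.exp (-(3 / 8) * x)) (Set.Ici (8 / 3)) := by
  apply antitoneOn_of_deriv_nonpos (convex_Ici _)
  · fun_prop
  · fun_prop
  · intro x hx
    rw [interior_Ici] at hx
    have hd : HasDerivAt (fun x : ℝ => x * Real.exp (-(3 / 8) * x))
        (Real.exp (-(3 / 8) * x) + x * (Real.exp (-(3 / 8) * x) * -(3 / 8))) x := by
      have h2 : HasDerivAt (fun x : ℝ => Real.exp (-(3 / 8) * x))
          (Real.exp (-(3 / 8) * x) * -(3 / 8)) x := by
        have hl : HasDerivAt (fun x : ℝ => -(3 / 8) * x) (-(3 / 8)) x := by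
          simpa using (hasDerivAt_id x).const_mul (-(3 / 8) : ℝ)
        exact hl.exp
      have := (hasDerivAt_id' x).mul h2; simp only [one_mul] at this; exact this
    rw [hd.deriv]
    have hxp := Real.exp_pos (-(3 / 8) * x)
    have : (8:ℝ)/3 < x := hx
    nlinarith

private lemma aux_key (t : ℝ) (ht : Real.exp 1 < t) :
    (t * Real.exp (-(t / 2))) ^ 3 + Real.exp (-(3 / (2 * t))) ≤ 1 := by
  have hE : (8:ℝ)/3 < Real.exp 1 := by
    have := Real.exp_one_gt_d9; norm_num at this ⊢; linarith
  have ht8 : (8:ℝ)/3 < t := lt_trans hE ht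
  have ht0 : (0:ℝ) < t := by linarith
  have hf : t * Real.exp (-(3/8) * t) ≤ (8/3) * Real.exp (-(3/8) * (8/3)) :=
    aux_antitone Set.self_mem_Ici (le_of_lt ht8) (le_of_lt ht8)
  have hf1 : t * Real.exp (-(3/8) * t) ≤ 1 := by
    have h1 : -(3/8 : ℝ) * (8/3) = -1 := by norm_num
    rw [h1] at hf
    have h2 : Real.exp (-1) = (Real.exp 1)⁻¹ := by rw [Real.exp_neg]
    have h3 : (8/3 : ℝ) * (Real.exp 1)⁻¹ ≤ 1 := by
      rw [mul_inv_le_iff₀ (Real.exp_pos 1)]; linarith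
    rw [h2] at hf; linarith
  have hf0 : 0 ≤ t * Real.exp (-(3/8) * t) := by positivity
  have ht4 : t ^ 4 * Real.exp (-(3/2) * t) ≤ 1 := by
    have : (t * Real.exp (-(3/8) * t)) ^ 4 ≤ 1 := pow_le_one₀ hf0 hf1
    calc t ^ 4 * Real.exp (-(3/2) * t)
        = (t * Real.exp (-(3/8) * t)) ^ 4 := by
          rw [mul_pow, ← Real.exp_nat_mul]; ring_nf
      _ ≤ 1 := this
  have hcube : (t * Real.exp (-(t / 2))) ^ 3 * t ≤ 1 := by
    calc (t * Real.exp (-(t / 2))) ^ 3 * t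
        = t ^ 4 * Real.exp (-(3/2) * t) := by
          rw [mul_pow, ← Real.exp_nat_mul]; ring_nf
      _ ≤ 1 := ht4
  have hq := aux_exp_neg_le_quadratic (3 / (2 * t)) (by positivity)
  have h3 : (t * Real.exp (-(t / 2))) ^ 3 ≤ 1 / t := by
    rw [le_div_iff₀ ht0]; exact hcube
  have h9 : 1 / t + (1 - 3 / (2 * t) + (3 / (2 * t)) ^ 2 / 2) ≤ 1 := by
    rw [← sub_nonneg]
    have hexp : 1 - (1 / t + (1 - 3 / (2 * t) + (3 / (2 * t)) ^ 2 / 2))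
        = (4 * t - 9) / (8 * t ^ 2) := by
      field_simp; ring
    rw [hexp]
    apply div_nonneg (by linarith) (by positivity)
  linarith

private lemma aux_gamma_tail_le (a r r' C : ℝ) (ha : 0 < a) (hr : 0 < r) (hr' : 0 < r')
    (s : Set ℝ) (hC : 0 ≤ C)
    (hb : ∀ x ∈ s, 0 ≤ x → Real.exp ((r' - r) * x) ≤ C) :
    ∫⁻ x in s, gammaPDF a r x ≤ ENNReal.ofReal ((r / r') ^ a * C) := by
  have hΓ : 0 < Real.Gamma a := Real.Gamma_pos_of_pos ha
  have hpt : ∀ x ∈ s, gammaPDF a r x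
      ≤ ENNReal.ofReal ((r / r') ^ a * C) * gammaPDF a r' x := by
    intro x hxs
    rcases lt_or_ge x 0 with hx | hx
    · rw [gammaPDF_of_neg hx]; exact zero_le
    · rw [gammaPDF_of_nonneg hx, gammaPDF_of_nonneg hx, ← ENNReal.ofReal_mul (by positivity)]
      apply ENNReal.ofReal_le_ofReal
      have hxe := hb x hxs hx
      have hxa : (0:ℝ) ≤ x ^ (a - 1) := Real.rpow_nonneg hx _
      have hrr : (r / r') ^ a * r' ^ a = r ^ a := by
        rw [← Real.mul_rpow (by positivity) hr'.le, div_mul_cancel₀ _ (ne_of_gt hr')]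
      have hee : Real.exp (-(r * x)) ≤ C * Real.exp (-(r' * x)) := by
        have := mul_le_mul_of_nonneg_right hxe (Real.exp_pos (-(r' * x))).le
        rwa [← Real.exp_add, sub_mul, show r' * x - r * x + -(r' * x) = -(r * x) by ring]
          at this
      calc r ^ a / Real.Gamma a * x ^ (a - 1) * Real.exp (-(r * x))
          ≤ r ^ a / Real.Gamma a * x ^ (a - 1) * (C * Real.exp (-(r' * x))) := by
            apply mul_le_mul_of_nonneg_left hee (by positivity)
        _ = (r / r') ^ a * C * (r' ^ a / Real.Gamma a * x ^ (a - 1) * Real.exp (-(r' * x))) := by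
            rw [← hrr]; ring
  calc ∫⁻ x in s, gammaPDF a r x
      ≤ ∫⁻ x in s, ENNReal.ofReal ((r / r') ^ a * C) * gammaPDF a r' x :=
        setLIntegral_mono ((measurable_gammaPDFReal a r').ennreal_ofReal.const_mul _) hpt
    _ ≤ ∫⁻ x, ENNReal.ofReal ((r / r') ^ a * C) * gammaPDF a r' x :=
        setLIntegral_le_lintegral _ _
    _ = ENNReal.ofReal ((r / r') ^ a * C) * ∫⁻ x, gammaPDF a r' x :=
        lintegral_const_mul _ ((measurable_gammaPDFReal a r').ennreal_ofReal)
    _ = ENNReal.ofReal ((r / r') ^ a * C) := by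
        rw [lintegral_gammaPDF_eq_one ha hr', mul_one]

end AuxChiSq

/-- The chi-squared distribution with `K` degrees of freedom: the Gamma distribution with
shape parameter `K/2` and rate parameter `1/2`. -/
noncomputable def chiSquaredMeasure (K : ℕ) : Measure ℝ :=
  gammaMeasure ((K : ℝ) / 2) (1 / 2)

theorem chiSq_two_sided_tail_bound
    {Ω : Type*} [MeasurableSpace Ω] (P : Measure Ω) [IsProbabilityMeasure P]
    (K : ℕ) (hK : 3 ≤ K) (w : ℝ) (hw : Real.sqrt (Real.exp 1) < w)
    (Q : Ω → ℝ) (hQ : Measurable Q) (hlaw : P.map Q = chiSquaredMeasure K) :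
    P {ω | Q ω < (K : ℝ) * w⁻¹ ^ 2 ∨ (K : ℝ) * w ^ 2 < Q ω}
      ≤ ENNReal.ofReal ((Real.sqrt (Real.exp 1) / w) ^ K) := by
  have hE0 : (0:ℝ) < Real.sqrt (Real.exp 1) := Real.sqrt_pos.mpr (Real.exp_pos 1)
  have hw0 : 0 < w := lt_trans hE0 hw
  set t : ℝ := w ^ 2 with htdef
  have ht0 : 0 < t := by positivity
  have htne : t ≠ 0 := ne_of_gt ht0
  have ht : Real.exp 1 < t := by
    have : Real.sqrt (Real.exp 1) ^ 2 < w ^ 2 :=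
      pow_lt_pow_left₀ hw (Real.sqrt_nonneg _) two_ne_zero
    rwa [Real.sq_sqrt (Real.exp_pos 1).le] at this
  have hK0 : 0 < ((K:ℝ)/2) := by
    have : (3:ℝ) ≤ (K:ℝ) := by exact_mod_cast hK
    linarith
  set c₁ : ℝ := (K : ℝ) * w⁻¹ ^ 2 with hc₁
  set c₂ : ℝ := (K : ℝ) * w ^ 2 with hc₂
  have hc₁t : c₁ = (K : ℝ) * t⁻¹ := by rw [hc₁, inv_pow]
  -- rewrite the probability as gamma measure of a union
  have hset : {ω | Q ω < c₁ ∨ c₂ < Q ω} = Q ⁻¹' (Set.Iio c₁ ∪ Set.Ioi c₂) := by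
    ext ω; simp [Set.mem_union]
  have hmeas : MeasurableSet (Set.Iio c₁ ∪ Set.Ioi c₂) :=
    measurableSet_Iio.union measurableSet_Ioi
  have hstep : P {ω | Q ω < c₁ ∨ c₂ < Q ω} = chiSquaredMeasure K (Set.Iio c₁ ∪ Set.Ioi c₂) := by
    rw [hset, ← Measure.map_apply hQ hmeas, hlaw]
  rw [hstep]
  have hunion : chiSquaredMeasure K (Set.Iio c₁ ∪ Set.Ioi c₂)
      ≤ chiSquaredMeasure K (Set.Iio c₁) + chiSquaredMeasure K (Set.Ioi c₂) :=
    measure_union_le _ _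
  have happ : ∀ (s : Set ℝ), MeasurableSet s →
      chiSquaredMeasure K s = ∫⁻ x in s, gammaPDF ((K:ℝ)/2) (1/2) x := fun s hs => by
    rw [chiSquaredMeasure, gammaMeasure, withDensity_apply _ hs]
  -- lower tail bound
  have hlow : chiSquaredMeasure K (Set.Iio c₁)
      ≤ ENNReal.ofReal (((1/2) / (t/2)) ^ ((K:ℝ)/2) * Real.exp ((t/2 - 1/2) * c₁)) := by
    rw [happ _ measurableSet_Iio]
    apply aux_gamma_tail_le _ _ _ _ hK0 (by norm_num) (by positivity) _ (Real.exp_pos _).le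
    intro x hx hx0
    apply Real.exp_le_exp.mpr
    have hcoef : (0:ℝ) ≤ t/2 - 1/2 := by nlinarith [Real.exp_one_gt_d9]
    exact mul_le_mul_of_nonneg_left (le_of_lt hx) hcoef
  -- upper tail bound
  have hup : chiSquaredMeasure K (Set.Ioi c₂)
      ≤ ENNReal.ofReal (((1/2) / (1/(2*t))) ^ ((K:ℝ)/2) * Real.exp ((1/(2*t) - 1/2) * c₂)) := by
    rw [happ _ measurableSet_Ioi]
    apply aux_gamma_tail_le _ _ _ _ hK0 (by norm_num) (by positivity) _ (Real.exp_pos _).le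
    intro x hx hx0
    apply Real.exp_le_exp.mpr
    have hcoef : 1/(2*t) - 1/2 ≤ (0:ℝ) := by
      have h1 : (1:ℝ) ≤ t := by nlinarith [Real.exp_one_gt_d9]
      have : 1/(2*t) ≤ 1/2 := by
        apply div_le_div_of_nonneg_left (by norm_num) (by norm_num) (by linarith)
      linarith
    exact mul_le_mul_of_nonpos_left (le_of_lt hx) hcoef
  -- real-number computations
  set g : ℝ := Real.sqrt (Real.exp 1) / w with hg
  set A : ℝ := t * Real.exp (-(t/2)) with hA
  set B : ℝ := Real.exp (-(1/(2*t))) with hB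
  have hsqrtE : Real.sqrt (Real.exp 1) = Real.exp (1/2) := (Real.exp_half 1).symm
  have hrpow : ∀ u : ℝ, 0 < u → u ^ ((K:ℝ)/2) = Real.sqrt u ^ K := fun u hu => by
    rw [show ((K:ℝ)/2) = (1/2 : ℝ) * (K:ℕ) by push_cast; ring,
      Real.rpow_mul hu.le, Real.rpow_natCast, ← Real.sqrt_eq_rpow]
  have hlowR : ((1/2) / (t/2)) ^ ((K:ℝ)/2) * Real.exp ((t/2 - 1/2) * c₁) = (g * B) ^ K := by
    have h1 : ((1:ℝ)/2) / (t/2) = t⁻¹ := by field_simp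
    have h2 : Real.sqrt t⁻¹ = w⁻¹ := by
      rw [htdef, ← inv_pow, Real.sqrt_sq (by positivity)]
    rw [h1, hrpow _ (by positivity), h2, hc₁t,
      show (t/2 - 1/2) * ((K:ℝ) * t⁻¹) = (K:ℕ) * (1/2 - 1/(2*t)) by field_simp,
      Real.exp_nat_mul, ← mul_pow]
    congr 1
    rw [hg, hsqrtE, hB, show (1:ℝ)/2 - 1/(2*t) = 1/2 + -(1/(2*t)) by ring, Real.exp_add]
    ring
  have hupR : ((1/2) / (1/(2*t))) ^ ((K:ℝ)/2) * Real.exp ((1/(2*t) - 1/2) * c₂) = (g * A) ^ K := by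
    have h1 : ((1:ℝ)/2) / (1/(2*t)) = t := by field_simp
    have h2 : Real.sqrt t = w := by rw [htdef, Real.sqrt_sq hw0.le]
    rw [h1, hrpow _ ht0, h2, hc₂, ← htdef,
      show (1/(2*t) - 1/2) * ((K:ℝ) * t) = (K:ℕ) * (1/2 + -(t/2) + -(1/2 - 1/2)) by
        field_simp; ring,
      Real.exp_nat_mul, ← mul_pow]
    congr 1
    rw [hg, hsqrtE, hA, Real.exp_add, Real.exp_add, htdef]
    field_simp
    ring
    simp
  -- the key inequality
  have hg0 : 0 ≤ g := by positivity
  have hA0 : 0 ≤ A := by positivity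
  have hB0 : 0 ≤ B := by positivity
  have hkey := aux_key t ht
  rw [← hA] at hkey
  have hB3 : B ^ 3 = Real.exp (-(3/(2*t))) := by
    rw [hB, ← Real.exp_nat_mul]; congr 1; field_simp; norm_num
  rw [← hB3] at hkey
  have hA1 : A ≤ 1 := by
    have hB3pos : 0 < B ^ 3 := by
      have : 0 < B := by rw [hB]; exact Real.exp_pos _
      positivity
    have : A ^ 3 < 1 := by linarith
    exact le_of_lt ((pow_lt_one_iff_of_nonneg hA0 (by norm_num)).mp this)
  have hB1 : B ≤ 1 := by
    rw [hB]
    apply Real.exp_le_one_iff.mpr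
    have : (0:ℝ) ≤ 1/(2*t) := by positivity
    linarith
  have hAK : A ^ K ≤ A ^ 3 := pow_le_pow_of_le_one hA0 hA1 hK
  have hBK : B ^ K ≤ B ^ 3 := pow_le_pow_of_le_one hB0 hB1 hK
  have hsum : (g * B) ^ K + (g * A) ^ K ≤ g ^ K := by
    have hgK : 0 ≤ g ^ K := by positivity
    calc (g * B) ^ K + (g * A) ^ K = g ^ K * (B ^ K + A ^ K) := by rw [mul_pow, mul_pow]; ring
      _ ≤ g ^ K * (B ^ 3 + A ^ 3) := by
          apply mul_le_mul_of_nonneg_left (by linarith) hgK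
      _ ≤ g ^ K * 1 := by
          apply mul_le_mul_of_nonneg_left (by linarith) hgK
      _ = g ^ K := mul_one _
  calc chiSquaredMeasure K (Set.Iio c₁ ∪ Set.Ioi c₂)
      ≤ chiSquaredMeasure K (Set.Iio c₁) + chiSquaredMeasure K (Set.Ioi c₂) := hunion
    _ ≤ ENNReal.ofReal ((g * B) ^ K) + ENNReal.ofReal ((g * A) ^ K) := by
        rw [← hlowR, ← hupR]; exact add_le_add hlow hup
    _ = ENNReal.ofReal ((g * B) ^ K + (g * A) ^ K) := by
        rw [ENNReal.ofReal_add (by positivity) (by positivity)]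
    _ ≤ ENNReal.ofReal (g ^ K) := ENNReal.ofReal_le_ofReal hsum
end

section
/- Let K ≥ 2 be an integer and let w > 0 be a real number. If Q is a random variable with the chi-squared distribution with K degrees of freedom, then P(Q ≤ K·w⁻²) ≤ (1/2)·(√e/w)^K. -/
open MeasureTheory ProbabilityTheory Real

lemma rpow_one_add_inv_le {a : ℝ} (ha : 0 < a) : ((a + 1) / a) ^ a ≤ Real.exp 1 := by
  have h1 : (0:ℝ) < (a + 1) / a := by positivity
  rw [Real.rpow_def_of_pos h1]
  have hlog : Real.log ((a + 1) / a) ≤ 1 / a := by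
    have : (a + 1) / a - 1 = 1 / a := by field_simp; ring
    linarith [Real.log_le_sub_one_of_pos h1]
  have : a * Real.log ((a + 1) / a) ≤ 1 := by
    calc a * Real.log ((a + 1) / a) ≤ a * (1 / a) := by
          exact mul_le_mul_of_nonneg_left hlog ha.le
      _ = 1 := by field_simp
  calc Real.exp (Real.log ((a+1)/a) * a) = Real.exp (a * Real.log ((a+1)/a)) := by ring_nf
    _ ≤ Real.exp 1 := Real.exp_le_exp.mpr this

lemma gamma_step {a : ℝ} (ha : 0 < a)
    (h : 2 * (a / Real.exp 1) ^ a ≤ Real.Gamma (a + 1)) :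
    2 * ((a + 1) / Real.exp 1) ^ (a + 1) ≤ Real.Gamma (a + 1 + 1) := by
  have he : (0:ℝ) < Real.exp 1 := Real.exp_pos 1
  have ha1 : (0:ℝ) < a + 1 := by linarith
  rw [Real.Gamma_add_one (by positivity : a + 1 ≠ 0)]
  have key : ((a + 1) / Real.exp 1) ^ (a + 1) ≤ (a + 1) * (a / Real.exp 1) ^ a := by
    have h2 : ((a + 1) / Real.exp 1) ^ (a + 1)
        = ((a + 1) / Real.exp 1) ^ a * ((a + 1) / Real.exp 1) := by
      rw [Real.rpow_add (by positivity), Real.rpow_one]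
    rw [h2]
    have h3 : ((a + 1) / Real.exp 1) ^ a = ((a+1)/a) ^ a * (a / Real.exp 1) ^ a := by
      rw [← Real.mul_rpow (by positivity) (by positivity)]
      congr 1
      field_simp
    rw [h3]
    have h4 : ((a+1)/a) ^ a ≤ Real.exp 1 := rpow_one_add_inv_le ha
    have h5 : (0:ℝ) ≤ (a / Real.exp 1) ^ a := Real.rpow_nonneg (by positivity) _
    calc ((a+1)/a) ^ a * (a / Real.exp 1) ^ a * ((a + 1) / Real.exp 1)
        ≤ Real.exp 1 * (a / Real.exp 1) ^ a * ((a + 1) / Real.exp 1) := by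
          apply mul_le_mul_of_nonneg_right (mul_le_mul_of_nonneg_right h4 h5) (by positivity)
      _ = (a + 1) * (a / Real.exp 1) ^ a := by field_simp
  calc 2 * ((a + 1) / Real.exp 1) ^ (a + 1) ≤ 2 * ((a + 1) * (a / Real.exp 1) ^ a) := by linarith
    _ = (a + 1) * (2 * (a / Real.exp 1) ^ a) := by ring
    _ ≤ (a + 1) * Real.Gamma (a + 1) := mul_le_mul_of_nonneg_left h ha1.le

lemma gamma_ind (m : ℕ) {b : ℝ} (hb : 0 < b)
    (hbase : 2 * (b / Real.exp 1) ^ b ≤ Real.Gamma (b + 1)) :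
    2 * ((b + m) / Real.exp 1) ^ (b + m) ≤ Real.Gamma (b + m + 1) := by
  induction m with
  | zero => simpa using hbase
  | succ n ih =>
      have hbn : (0:ℝ) < b + n := by positivity
      have := gamma_step hbn ih
      have hcast : (b + (n + 1 : ℕ) : ℝ) = b + n + 1 := by push_cast; ring
      rw [hcast]
      convert this using 3

lemma gamma_base_even : 2 * ((1:ℝ) / Real.exp 1) ^ (1:ℝ) ≤ Real.Gamma (1 + 1) := by
  rw [Real.rpow_one]
  have : Real.Gamma (1+1) = 1 := by
    rw [Real.Gamma_add_one one_ne_zero, Real.Gamma_one]; ring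
  rw [this, mul_one_div, div_le_one (Real.exp_pos 1)]
  have := Real.exp_one_gt_d9
  linarith

lemma gamma_base_odd : 2 * ((3/2:ℝ) / Real.exp 1) ^ ((3:ℝ)/2) ≤ Real.Gamma ((3:ℝ)/2 + 1) := by
  have he : (0:ℝ) < Real.exp 1 := Real.exp_pos 1
  have hG : Real.Gamma ((3:ℝ)/2 + 1) = 3/4 * Real.sqrt π := by
    rw [Real.Gamma_add_one (by norm_num)]
    have : (3:ℝ)/2 = 1/2 + 1 := by norm_num
    rw [this, Real.Gamma_add_one (by norm_num), Real.Gamma_one_half_eq]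
    ring
  rw [hG]
  have hc : (0:ℝ) < (3/2:ℝ) / Real.exp 1 := by positivity
  apply le_of_pow_le_pow_left₀ (n := 2) (by norm_num) (by positivity)
  have hsq : (((3/2:ℝ) / Real.exp 1) ^ ((3:ℝ)/2)) ^ (2:ℕ)
      = ((3/2:ℝ) / Real.exp 1) ^ (3:ℕ) := by
    rw [← Real.rpow_natCast (((3/2:ℝ) / Real.exp 1) ^ ((3:ℝ)/2)) 2,
      ← Real.rpow_mul hc.le, ← Real.rpow_natCast ((3/2:ℝ) / Real.exp 1) 3]
    norm_num
  rw [mul_pow, hsq, mul_pow, Real.sq_sqrt Real.pi_pos.le]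
  have hexp : (2.7182818283:ℝ) < Real.exp 1 := Real.exp_one_gt_d9
  have hexp3 : (19:ℝ) ≤ (Real.exp 1) ^ (3:ℕ) := by
    have h27 : ((2.7:ℝ)) ^ (3:ℕ) ≤ (Real.exp 1) ^ (3:ℕ) :=
      pow_le_pow_left₀ (by norm_num) (by linarith) 3
    nlinarith
  have hpi : (3.14:ℝ) ≤ π := by linarith [Real.pi_gt_d6]
  have he3 : (0:ℝ) < (Real.exp 1) ^ (3:ℕ) := by positivity
  have hprod : (3.14:ℝ) * 19 ≤ π * (Real.exp 1) ^ (3:ℕ) :=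
    mul_le_mul hpi hexp3 (by norm_num) Real.pi_pos.le
  rw [div_pow]
  have hgoal : (2:ℝ) ^ (2:ℕ) * ((3/2) ^ (3:ℕ) / Real.exp 1 ^ (3:ℕ))
      = (27/2) / Real.exp 1 ^ (3:ℕ) := by ring
  rw [hgoal, div_le_iff₀ he3]
  nlinarith

lemma gamma_lower (K : ℕ) (hK : 2 ≤ K) :
    2 * (((K:ℝ)/2) / Real.exp 1) ^ ((K:ℝ)/2) ≤ Real.Gamma ((K:ℝ)/2 + 1) := by
  rcases Nat.even_or_odd K with ⟨n, hn⟩ | ⟨n, hn⟩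
  · have hn1 : 1 ≤ n := by omega
    have hcast : ((K:ℝ)/2) = 1 + ((n - 1 : ℕ) : ℝ) := by
      have : ((n - 1 : ℕ) : ℝ) = (n:ℝ) - 1 := by
        push_cast [Nat.cast_sub hn1]; ring
      rw [this, hn]; push_cast; ring
    rw [hcast]
    exact gamma_ind (n - 1) one_pos gamma_base_even
  · have hn1 : 1 ≤ n := by omega
    have hcast : ((K:ℝ)/2) = 3/2 + ((n - 1 : ℕ) : ℝ) := by
      have : ((n - 1 : ℕ) : ℝ) = (n:ℝ) - 1 := by
        push_cast [Nat.cast_sub hn1]; ring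
      rw [this, hn]; push_cast; ring
    rw [hcast]
    exact gamma_ind (n - 1) (by norm_num) gamma_base_odd

theorem chiSq_lower_tail_bound
    {Ω : Type*} [MeasurableSpace Ω] (P : Measure Ω) [IsProbabilityMeasure P]
    (K : ℕ) (hK : 2 ≤ K) (w : ℝ) (hw : 0 < w)
    (Q : Ω → ℝ) (hQ : Measurable Q) (hlaw : P.map Q = chiSquaredMeasure K) :
    P {ω | Q ω ≤ (K : ℝ) * w⁻¹ ^ 2}
      ≤ ENNReal.ofReal ((1 / 2) * (Real.sqrt (Real.exp 1) / w) ^ K) := by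
  have hK2 : (2:ℝ) ≤ (K:ℝ) := by exact_mod_cast hK
  set a : ℝ := (K:ℝ)/2 with ha_def
  have ha1 : (1:ℝ) ≤ a := by rw [ha_def]; linarith
  have ha : (0:ℝ) < a := by linarith
  set t : ℝ := (K:ℝ) * w⁻¹ ^ 2 with ht_def
  have ht : 0 < t := by rw [ht_def]; positivity
  set C : ℝ := (1/2:ℝ) ^ a / Real.Gamma a with hC_def
  have hGa : 0 < Real.Gamma a := Real.Gamma_pos_of_pos ha
  have hC0 : 0 ≤ C := by
    rw [hC_def]
    exact div_nonneg (Real.rpow_nonneg (by norm_num) _) hGa.le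
  -- rewrite probability as gamma measure of Iic t
  have hset : {ω | Q ω ≤ t} = Q ⁻¹' (Set.Iic t) := rfl
  rw [hset, ← MeasureTheory.Measure.map_apply hQ measurableSet_Iic, hlaw]
  show gammaMeasure a (1/2) (Set.Iic t) ≤ _
  rw [gammaMeasure, MeasureTheory.withDensity_apply _ measurableSet_Iic]
  have hmeas : Measurable fun x : ℝ => ENNReal.ofReal (C * x ^ (a-1)) :=
    ((measurable_id'.pow_const (a-1)).const_mul C).ennreal_ofReal
  calc ∫⁻ x in Set.Iic t, gammaPDF a (1/2) x
      ≤ ∫⁻ x in Set.Iic t,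
          (Set.Icc 0 t).indicator (fun x => ENNReal.ofReal (C * x ^ (a-1))) x := by
        apply setLIntegral_mono' measurableSet_Iic
        intro x hx
        rcases le_or_gt 0 x with h0 | h0
        · rw [Set.indicator_of_mem (Set.mem_Icc.mpr ⟨h0, hx⟩), gammaPDF_of_nonneg h0]
          apply ENNReal.ofReal_le_ofReal
          rw [hC_def]
          have hxp : 0 ≤ x ^ (a-1) := Real.rpow_nonneg h0 _
          have : (1/2:ℝ) ^ a / Real.Gamma a * x ^ (a-1) * Real.exp (-(1/2 * x))
              ≤ (1/2:ℝ) ^ a / Real.Gamma a * x ^ (a-1) * 1 := by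
            apply mul_le_mul_of_nonneg_left _ (by positivity)
            exact Real.exp_le_one_iff.mpr (by linarith)
          linarith [this]
        · rw [gammaPDF_of_neg h0]
          exact zero_le
    _ ≤ ∫⁻ x, (Set.Icc 0 t).indicator (fun x => ENNReal.ofReal (C * x ^ (a-1))) x :=
        setLIntegral_le_lintegral _ _
    _ = ∫⁻ x in Set.Icc 0 t, ENNReal.ofReal (C * x ^ (a-1)) :=
        lintegral_indicator measurableSet_Icc _
    _ = ENNReal.ofReal (∫ x in Set.Icc 0 t, C * x ^ (a-1)) := by
        rw [MeasureTheory.ofReal_integral_eq_lintegral_ofReal]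
        · apply Integrable.const_mul
          apply ContinuousOn.integrableOn_compact isCompact_Icc
          exact (Real.continuous_rpow_const (by linarith)).continuousOn
        · filter_upwards [ae_restrict_mem measurableSet_Icc] with x hx
          exact mul_nonneg hC0 (Real.rpow_nonneg hx.1 _)
    _ ≤ ENNReal.ofReal ((1 / 2) * (Real.sqrt (Real.exp 1) / w) ^ K) := by
        apply ENNReal.ofReal_le_ofReal
        have hInt : ∫ x in Set.Icc 0 t, C * x ^ (a-1) = C * (t ^ a / a) := by
          rw [MeasureTheory.integral_Icc_eq_integral_Ioc,
            ← intervalIntegral.integral_of_le ht.le,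
            intervalIntegral.integral_const_mul,
            integral_rpow (Or.inl (by linarith : (-1:ℝ) < a - 1))]
          have haa : a - 1 + 1 = a := by ring
          rw [haa, Real.zero_rpow ha.ne']
          ring
        rw [hInt]
        -- now pure real-number estimates
        have he : (0:ℝ) < Real.exp 1 := Real.exp_pos 1
        have hwK : (0:ℝ) < w ^ K := pow_pos hw K
        have hGa1 : 0 < Real.Gamma (a + 1) := Real.Gamma_pos_of_pos (by linarith)
        have hEa : (0:ℝ) < Real.exp 1 ^ a := Real.rpow_pos_of_pos he a
        -- LHS = (a/w^2)^a / Gamma (a+1)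
        have hLHS : C * (t ^ a / a) = a ^ a / w ^ K / Real.Gamma (a + 1) := by
          rw [hC_def, Real.Gamma_add_one ha.ne']
          have ht2 : t = a / w ^ 2 * 2 := by
            rw [ht_def, ha_def]; field_simp
          have h1 : (1/2:ℝ) ^ a * t ^ a = (a / w ^ 2) ^ a := by
            rw [← Real.mul_rpow (by norm_num) (by positivity : (0:ℝ) ≤ t), ht2]
            congr 1
            ring
          have h2 : (a / w ^ 2) ^ a = a ^ a / w ^ K := by
            rw [Real.div_rpow ha.le (by positivity)]
            congr 1
            rw [← Real.rpow_natCast w 2, ← Real.rpow_mul hw.le,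
              ← Real.rpow_natCast w K]
            congr 1
            rw [ha_def]; ring
          have hsplit : (1/2:ℝ) ^ a / Real.Gamma a * (t ^ a / a)
              = ((1/2:ℝ) ^ a * t ^ a) / (a * Real.Gamma a) := by
            ring
          rw [hsplit, h1, h2, div_div]
        have hRHS : (1/2:ℝ) * (Real.sqrt (Real.exp 1) / w) ^ K
            = (1/2:ℝ) * (Real.exp 1 ^ a / w ^ K) := by
          rw [div_pow, Real.sqrt_eq_rpow]
          congr 2
          rw [← Real.rpow_natCast (Real.exp 1 ^ ((1:ℝ)/2)) K, ← Real.rpow_mul he.le]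
          congr 1
          rw [ha_def]; ring
        rw [hLHS, hRHS]
        have hkey := gamma_lower K hK
        rw [← ha_def] at hkey
        have hdiv : (a / Real.exp 1) ^ a = a ^ a / Real.exp 1 ^ a :=
          Real.div_rpow ha.le he.le a
        rw [hdiv] at hkey
        -- hkey : 2 * (a^a / e^a) ≤ Gamma (a+1)
        have hmain : a ^ a * 2 ≤ Real.Gamma (a+1) * Real.exp 1 ^ a := by
          rw [← mul_div_assoc, div_le_iff₀ hEa] at hkey
          linarith
        rw [div_div, div_le_iff₀ (by positivity : (0:ℝ) < w ^ K * Real.Gamma (a+1))]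
        have heq : (1/2:ℝ) * (Real.exp 1 ^ a / w ^ K) * (w ^ K * Real.Gamma (a+1))
            = Real.Gamma (a+1) * Real.exp 1 ^ a / 2 := by
          field_simp
        rw [heq]
        linarith
end

section
/- Let K ≥ 1 be an integer and let w ≥ 1 be a real number. If Q is a random variable with the chi-squared distribution with K degrees of freedom, then P(Q ≥ K·w²) ≤ (w² · e^{1−w²})^{K/2}. -/
open MeasureTheory ProbabilityTheory Real


lemma exp_mul_gammaPDFReal (a r t : ℝ) (hr : 0 < r) (htr : t < r) (x : ℝ) :
    Real.exp (t * x) * gammaPDFReal a r x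
      = (r / (r - t)) ^ a * gammaPDFReal a (r - t) x := by
  unfold gammaPDFReal
  split_ifs with h
  · have hrt : (0:ℝ) < r - t := by linarith
    have h1 : Real.exp (t * x) * Real.exp (-(r * x)) = Real.exp (-((r - t) * x)) := by
      rw [← Real.exp_add]; ring_nf
    have h2 : (r / (r - t)) ^ a * (r - t) ^ a = r ^ a := by
      rw [← Real.mul_rpow (div_nonneg hr.le hrt.le) hrt.le, div_mul_cancel₀ _ hrt.ne']
    calc Real.exp (t * x) * (r ^ a / Real.Gamma a * x ^ (a - 1) * Real.exp (-(r * x)))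
        = ((r / (r - t)) ^ a * (r - t) ^ a) / Real.Gamma a * x ^ (a - 1)
            * (Real.exp (t * x) * Real.exp (-(r * x))) := by rw [h2]; ring
      _ = _ := by rw [h1]; ring
  · simp

lemma gammaMeasure_tail_le {a r t ε : ℝ} (ha : 0 < a) (ht : 0 ≤ t) (htr : t < r)
    (hε : 0 ≤ ε) :
    gammaMeasure a r (Set.Ici ε)
      ≤ ENNReal.ofReal (Real.exp (-t * ε) * (r / (r - t)) ^ a) := by
  have hr : 0 < r := lt_of_le_of_lt ht htr
  have hrt : (0:ℝ) < r - t := by linarith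
  rw [gammaMeasure, withDensity_apply _ measurableSet_Ici]
  have step1 : ∫⁻ x in Set.Ici ε, gammaPDF a r x
      ≤ ∫⁻ x in Set.Ici ε, ENNReal.ofReal (Real.exp (-t * ε))
          * ENNReal.ofReal (Real.exp (t * x) * gammaPDFReal a r x) := by
    refine setLIntegral_mono' measurableSet_Ici fun x hx => ?_
    rw [← ENNReal.ofReal_mul (Real.exp_nonneg _), gammaPDF]
    refine ENNReal.ofReal_le_ofReal ?_
    have h1 : (1:ℝ) ≤ Real.exp (-t * ε) * Real.exp (t * x) := by
      rw [← Real.exp_add]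
      refine Real.one_le_exp ?_
      have := mul_le_mul_of_nonneg_left hx ht
      nlinarith
    nlinarith [gammaPDFReal_nonneg ha hr x, h1, Real.exp_pos (-t * ε), Real.exp_pos (t * x)]
  have step2 : ∫⁻ x, ENNReal.ofReal (Real.exp (t * x) * gammaPDFReal a r x)
      = ENNReal.ofReal ((r / (r - t)) ^ a) := by
    have : ∀ x, ENNReal.ofReal (Real.exp (t * x) * gammaPDFReal a r x)
        = ENNReal.ofReal ((r / (r - t)) ^ a) * gammaPDF a (r - t) x := by
      intro x
      rw [exp_mul_gammaPDFReal a r t hr htr x, gammaPDF,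
        ← ENNReal.ofReal_mul (by positivity)]
    simp_rw [this]
    rw [lintegral_const_mul' _ _ ENNReal.ofReal_ne_top,
      lintegral_gammaPDF_eq_one ha hrt, mul_one]
  calc ∫⁻ x in Set.Ici ε, gammaPDF a r x
      ≤ ∫⁻ x in Set.Ici ε, ENNReal.ofReal (Real.exp (-t * ε))
          * ENNReal.ofReal (Real.exp (t * x) * gammaPDFReal a r x) := step1
    _ ≤ ∫⁻ x, ENNReal.ofReal (Real.exp (-t * ε))
          * ENNReal.ofReal (Real.exp (t * x) * gammaPDFReal a r x) :=
        setLIntegral_le_lintegral _ _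
    _ = ENNReal.ofReal (Real.exp (-t * ε))
          * ∫⁻ x, ENNReal.ofReal (Real.exp (t * x) * gammaPDFReal a r x) :=
        lintegral_const_mul' _ _ ENNReal.ofReal_ne_top
    _ = ENNReal.ofReal (Real.exp (-t * ε) * (r / (r - t)) ^ a) := by
        rw [step2, ← ENNReal.ofReal_mul (Real.exp_nonneg _)]

theorem chiSq_upper_tail_chernoff_bound
    {Ω : Type*} [MeasurableSpace Ω] (P : Measure Ω) [IsProbabilityMeasure P]
    (K : ℕ) (hK : 1 ≤ K) (w : ℝ) (hw : 1 ≤ w)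
    (Q : Ω → ℝ) (hQ : Measurable Q) (hlaw : P.map Q = chiSquaredMeasure K) :
    P {ω | (K : ℝ) * w ^ 2 ≤ Q ω}
      ≤ ENNReal.ofReal ((w ^ 2 * Real.exp (1 - w ^ 2)) ^ ((K : ℝ) / 2)) := by
  have hw0 : (0:ℝ) < w := lt_of_lt_of_le one_pos hw
  have hw2 : (1:ℝ) ≤ w ^ 2 := by nlinarith
  have hw2' : (0:ℝ) < w ^ 2 := by positivity
  have hK0 : (0:ℝ) < K := by exact_mod_cast hK
  set a : ℝ := (K : ℝ) / 2 with ha_def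
  set t : ℝ := (1 - (w ^ 2)⁻¹) / 2 with ht_def
  have ha : 0 < a := by positivity
  have hinv : (w ^ 2)⁻¹ ≤ 1 := by
    rw [inv_le_one_iff₀]; right; exact hw2
  have hinv0 : (0:ℝ) < (w ^ 2)⁻¹ := by positivity
  have ht : 0 ≤ t := by unfold t; linarith
  have htr : t < 1 / 2 := by unfold t; linarith
  have hset : {ω | (K : ℝ) * w ^ 2 ≤ Q ω} = Q ⁻¹' (Set.Ici ((K : ℝ) * w ^ 2)) := rfl
  rw [hset, ← Measure.map_apply hQ measurableSet_Ici, hlaw, chiSquaredMeasure]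
  refine le_trans (gammaMeasure_tail_le ha ht htr (by positivity)) ?_
  apply le_of_eq
  congr 1
  have h1 : (1:ℝ) / 2 / (1 / 2 - t) = w ^ 2 := by
    unfold t; field_simp; ring
  have h2 : -t * ((K : ℝ) * w ^ 2) = (1 - w ^ 2) * a := by
    unfold t a; field_simp; ring
  rw [Real.mul_rpow hw2'.le (Real.exp_nonneg _), ← Real.exp_mul, h1, h2]
  ring
end

section
/- Let K ≥ 3 be an integer and let w ≥ 1 be a real number. If Q is a random variable with the chi-squared distribution with K degrees of freedom, then P(Q ≥ K·w²) ≤ (1/2)·(√e/w)^K. -/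
open MeasureTheory ProbabilityTheory Real

lemma chiSq_key_real (K : ℕ) (hK : 3 ≤ K) (w : ℝ) (hw : 1 ≤ w) :
    w ^ K * Real.exp (-((K : ℝ) * (w ^ 2 - 1) / 2))
      ≤ 1 / 2 * (Real.sqrt (Real.exp 1) / w) ^ K := by
  have hw0 : 0 < w := lt_of_lt_of_le one_pos hw
  have hsqrt : Real.sqrt (Real.exp 1) = Real.exp (1 / 2) := by
    rw [← Real.exp_half]
  have h1 : w ^ 2 * Real.exp (-(w ^ 2 / 2)) ≤ 2 * Real.exp (-1) := by
    have h2 : w ^ 2 / 2 - 1 + 1 ≤ Real.exp (w ^ 2 / 2 - 1) := Real.add_one_le_exp _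
    have h3 : w ^ 2 ≤ 2 * Real.exp (w ^ 2 / 2 - 1) := by linarith
    calc w ^ 2 * Real.exp (-(w ^ 2 / 2))
        ≤ 2 * Real.exp (w ^ 2 / 2 - 1) * Real.exp (-(w ^ 2 / 2)) :=
          mul_le_mul_of_nonneg_right h3 (Real.exp_pos _).le
      _ = 2 * Real.exp (-1) := by
          rw [mul_assoc, ← Real.exp_add]; ring_nf
  have hbase : 0 ≤ w ^ 2 * Real.exp (-(w ^ 2 / 2)) := by positivity
  have h4 : (w ^ 2 * Real.exp (-(w ^ 2 / 2))) ^ K ≤ (2 * Real.exp (-1)) ^ K :=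
    pow_le_pow_left₀ hbase h1 K
  have he : (2.7182818283 : ℝ) < Real.exp 1 := Real.exp_one_gt_d9
  have hep : (0 : ℝ) < Real.exp 1 := Real.exp_pos 1
  have h01 : 2 * Real.exp (-1) ≤ 1 := by
    rw [Real.exp_neg]
    calc 2 * (Real.exp 1)⁻¹ ≤ Real.exp 1 * (Real.exp 1)⁻¹ := by
          apply mul_le_mul_of_nonneg_right (by linarith) (by positivity)
      _ = 1 := mul_inv_cancel₀ hep.ne'
  have h5 : (2 * Real.exp (-1)) ^ K ≤ (2 * Real.exp (-1)) ^ 3 :=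
    pow_le_pow_of_le_one (by positivity) h01 hK
  have h6 : (2 * Real.exp (-1)) ^ 3 ≤ 1 / 2 := by
    rw [Real.exp_neg, mul_pow, inv_pow, ← div_eq_mul_inv,
      div_le_div_iff₀ (by positivity) (by norm_num : (0:ℝ) < 2)]
    nlinarith [mul_pos hep hep, sq_nonneg (Real.exp 1 - 2.7182818283)]
  have hL : w ^ K * Real.exp (-((K : ℝ) * (w ^ 2 - 1) / 2))
      = (w ^ 2 * Real.exp (-(w ^ 2 / 2))) ^ K * (Real.exp (1 / 2) / w) ^ K := by
    have harg : -((K : ℝ) * (w ^ 2 - 1) / 2) = (K : ℕ) * (-((w ^ 2 - 1) / 2)) := by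
      push_cast; ring
    rw [harg, Real.exp_nat_mul, ← mul_pow, ← mul_pow]
    congr 1
    rw [show -((w ^ 2 - 1) / 2) = -(w ^ 2 / 2) + 1 / 2 by ring, Real.exp_add]
    field_simp
  rw [hL, hsqrt]
  exact mul_le_mul_of_nonneg_right (h4.trans (h5.trans h6)) (by positivity)

theorem chiSq_upper_tail_bound
    {Ω : Type*} [MeasurableSpace Ω] (P : Measure Ω) [IsProbabilityMeasure P]
    (K : ℕ) (hK : 3 ≤ K) (w : ℝ) (hw : 1 ≤ w)
    (Q : Ω → ℝ) (hQ : Measurable Q) (hlaw : P.map Q = chiSquaredMeasure K) :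
    P {ω | (K : ℝ) * w ^ 2 ≤ Q ω}
      ≤ ENNReal.ofReal ((1 / 2) * (Real.sqrt (Real.exp 1) / w) ^ K) := by
  have hw0 : 0 < w := lt_of_lt_of_le one_pos hw
  have hw2 : (0 : ℝ) < w ^ 2 := pow_pos hw0 2
  have hK0 : (0 : ℝ) < (K : ℝ) := by exact_mod_cast lt_of_lt_of_le (by norm_num) hK
  have ha : (0 : ℝ) < (K : ℝ) / 2 := by linarith
  set a : ℝ := (K : ℝ) / 2 with ha_def
  set r2 : ℝ := 1 / (2 * w ^ 2) with hr2_def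
  have hr2 : (0 : ℝ) < r2 := by positivity
  set c : ℝ := (K : ℝ) * w ^ 2 with hc_def
  have hc0 : (0 : ℝ) < c := by positivity
  set c₀ : ℝ := w ^ K * Real.exp (-((K : ℝ) * (w ^ 2 - 1) / 2)) with hc₀_def
  have hc₀0 : (0 : ℝ) ≤ c₀ := by positivity
  -- rewrite the probability as an integral of the gamma pdf
  have hset : {ω | c ≤ Q ω} = Q ⁻¹' Set.Ici c := rfl
  rw [hset, ← MeasureTheory.Measure.map_apply hQ measurableSet_Ici, hlaw]
  rw [chiSquaredMeasure, gammaMeasure, withDensity_apply _ measurableSet_Ici]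
  -- pointwise bound on the pdf
  have hpt : ∀ x ∈ Set.Ici c,
      gammaPDF a (1 / 2) x ≤ ENNReal.ofReal c₀ * gammaPDF a r2 x := by
    intro x hx
    have hx' : c ≤ x := hx
    have hx0 : (0 : ℝ) ≤ x := le_trans hc0.le hx'
    rw [gammaPDF_of_nonneg hx0, gammaPDF_of_nonneg hx0, ← ENNReal.ofReal_mul hc₀0]
    apply ENNReal.ofReal_le_ofReal
    have hΓ : (0 : ℝ) < Real.Gamma a := Real.Gamma_pos_of_pos ha
    have hxp : (0 : ℝ) ≤ x ^ (a - 1) := Real.rpow_nonneg hx0 _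
    -- (1/2)^a = w^K * r2^a
    have hpow : ((1 : ℝ) / 2) ^ a = w ^ K * r2 ^ a := by
      have h12 : (1 : ℝ) / 2 = r2 * w ^ 2 := by
        rw [hr2_def]; field_simp
      rw [h12, Real.mul_rpow hr2.le (sq_nonneg w)]
      have : (w ^ 2 : ℝ) ^ a = w ^ K := by
        rw [← Real.rpow_natCast w 2, ← Real.rpow_mul hw0.le, ha_def,
          show ((2 : ℕ) : ℝ) * ((K : ℝ) / 2) = (K : ℝ) by push_cast; ring,
          Real.rpow_natCast]
      rw [this]; ring
    -- exponential comparison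
    have hexp : Real.exp (-(1 / 2 * x)) ≤ Real.exp (-((K : ℝ) * (w ^ 2 - 1) / 2)) *
        Real.exp (-(r2 * x)) := by
      rw [← Real.exp_add, Real.exp_le_exp]
      have hx'' : (K : ℝ) * w ^ 2 ≤ x := hx'
      have hw1 : (1 : ℝ) ≤ w ^ 2 := by nlinarith
      have key : (K : ℝ) * (w ^ 2 - 1) * w ^ 2 + x ≤ x * w ^ 2 := by
        nlinarith [mul_nonneg (sub_nonneg.2 hw1) (sub_nonneg.2 hx'')]
      rw [← sub_nonneg]
      have heq : -((K : ℝ) * (w ^ 2 - 1) / 2) + -(r2 * x) - -(1 / 2 * x)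
          = (x * w ^ 2 - ((K : ℝ) * (w ^ 2 - 1) * w ^ 2 + x)) / (2 * w ^ 2) := by
        rw [hr2_def]; field_simp; ring
      rw [heq]
      exact div_nonneg (by linarith) (by positivity)
    calc (1 / 2 : ℝ) ^ a / Real.Gamma a * x ^ (a - 1) * Real.exp (-(1 / 2 * x))
        = (w ^ K * r2 ^ a) / Real.Gamma a * x ^ (a - 1) * Real.exp (-(1 / 2 * x)) := by
          rw [hpow]
      _ ≤ (w ^ K * r2 ^ a) / Real.Gamma a * x ^ (a - 1) *
          (Real.exp (-((K : ℝ) * (w ^ 2 - 1) / 2)) * Real.exp (-(r2 * x))) := by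
          apply mul_le_mul_of_nonneg_left hexp
          positivity
      _ = c₀ * (r2 ^ a / Real.Gamma a * x ^ (a - 1) * Real.exp (-(r2 * x))) := by
          rw [hc₀_def]; ring
  -- chain of inequalities
  calc ∫⁻ x in Set.Ici c, gammaPDF a (1 / 2) x
      ≤ ∫⁻ x in Set.Ici c, ENNReal.ofReal c₀ * gammaPDF a r2 x := by
        apply setLIntegral_mono (by exact (measurable_gammaPDFReal a r2).ennreal_ofReal.const_mul _) hpt
    _ = ENNReal.ofReal c₀ * ∫⁻ x in Set.Ici c, gammaPDF a r2 x := by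
        rw [lintegral_const_mul' _ _ ENNReal.ofReal_ne_top]
    _ ≤ ENNReal.ofReal c₀ * 1 := by
        apply mul_le_mul_right
        calc ∫⁻ x in Set.Ici c, gammaPDF a r2 x ≤ ∫⁻ x, gammaPDF a r2 x :=
              setLIntegral_le_lintegral _ _
          _ = 1 := lintegral_gammaPDF_eq_one ha hr2
    _ ≤ ENNReal.ofReal ((1 / 2) * (Real.sqrt (Real.exp 1) / w) ^ K) := by
        rw [mul_one]
        exact ENNReal.ofReal_le_ofReal (chiSq_key_real K hK w hw)
end

section
/- For every real number a ≥ 1, the Gamma function satisfies Γ(a) ≥ 2 · a^{a−1} · e^{−a}. -/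
open MeasureTheory Set

theorem Gamma_lower_bound (a : ℝ) (ha : 1 ≤ a) :
    2 * a ^ (a - 1) * Real.exp (-a) ≤ Real.Gamma a := by
  have ha0 : (0:ℝ) < a := lt_of_lt_of_le one_pos ha
  have ha1 : (-1:ℝ) < a - 1 := by linarith
  rw [Real.Gamma_eq_integral ha0]
  have hint : IntegrableOn (fun x => Real.exp (-x) * x ^ (a-1)) (Ioi 0) :=
    Real.GammaIntegral_convergent ha0
  have hsplit : Ioc (0:ℝ) a ∪ Ioi a = Ioi (0:ℝ) := Ioc_union_Ioi_eq_Ioi ha0.le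
  have hdisj : Disjoint (Ioc (0:ℝ) a) (Ioi a) := Ioc_disjoint_Ioi le_rfl
  have h1int : IntegrableOn (fun x => Real.exp (-x) * x ^ (a-1)) (Ioc 0 a) := by
    apply hint.mono_set; rw [← hsplit]; exact subset_union_left
  have h2int : IntegrableOn (fun x => Real.exp (-x) * x ^ (a-1)) (Ioi a) := by
    apply hint.mono_set; rw [← hsplit]; exact subset_union_right
  have hsum : (∫ x in Ioi (0:ℝ), Real.exp (-x) * x ^ (a-1))
      = (∫ x in Ioc 0 a, Real.exp (-x) * x ^ (a-1))
        + ∫ x in Ioi a, Real.exp (-x) * x ^ (a-1) := by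
    rw [← hsplit, setIntegral_union hdisj measurableSet_Ioi h1int h2int]
  -- lower integrands
  have hlow1int : IntegrableOn (fun x => Real.exp (-a) * x ^ (a-1)) (Ioc 0 a) := by
    have := (intervalIntegral.intervalIntegrable_rpow' (a := 0) (b := a) ha1)
    rw [intervalIntegrable_iff_integrableOn_Ioc_of_le ha0.le] at this
    exact this.const_mul _
  have hlow2int : IntegrableOn (fun x => a ^ (a-1) * Real.exp (-x)) (Ioi a) := by
    have := exp_neg_integrableOn_Ioi a (one_pos (α := ℝ))
    simp only [neg_mul, one_mul] at this
    exact this.const_mul _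
  have h1 : Real.exp (-a) * a ^ (a-1) ≤ ∫ x in Ioc 0 a, Real.exp (-x) * x ^ (a-1) := by
    have hmono : ∀ x ∈ Ioc (0:ℝ) a,
        Real.exp (-a) * x ^ (a-1) ≤ Real.exp (-x) * x ^ (a-1) := by
      intro x hx
      have : Real.exp (-a) ≤ Real.exp (-x) := Real.exp_le_exp.2 (by linarith [hx.2])
      exact mul_le_mul_of_nonneg_right this (Real.rpow_nonneg hx.1.le _)
    have := setIntegral_mono_on hlow1int h1int measurableSet_Ioc hmono
    calc Real.exp (-a) * a ^ (a-1)
        = ∫ x in Ioc 0 a, Real.exp (-a) * x ^ (a-1) := by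
          rw [integral_const_mul]
          congr 1
          rw [← intervalIntegral.integral_of_le ha0.le,
            integral_rpow (Or.inl ha1)]
          rw [Real.zero_rpow (by linarith : a - 1 + 1 ≠ 0)]
          rw [Real.rpow_sub ha0, Real.rpow_one]
          ring_nf
      _ ≤ _ := this
  have h2 : a ^ (a-1) * Real.exp (-a) ≤ ∫ x in Ioi a, Real.exp (-x) * x ^ (a-1) := by
    have hmono : ∀ x ∈ Ioi a,
        a ^ (a-1) * Real.exp (-x) ≤ Real.exp (-x) * x ^ (a-1) := by
      intro x hx
      rw [mul_comm]
      exact mul_le_mul_of_nonneg_left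
        (Real.rpow_le_rpow ha0.le (le_of_lt hx) (by linarith)) (Real.exp_pos _).le
    have := setIntegral_mono_on hlow2int h2int measurableSet_Ioi hmono
    calc a ^ (a-1) * Real.exp (-a)
        = ∫ x in Ioi a, a ^ (a-1) * Real.exp (-x) := by
          rw [integral_const_mul, integral_exp_neg_Ioi]
      _ ≤ _ := this
  rw [hsum]
  nlinarith [h1, h2]
end

section
/- Let Σ ∈ ℝ^{N×N} be a symmetric positive definite matrix, let S be a finite nonempty set (of parameter values), let u : S → ℝ^N and ũ : S → ℝ^N be arbitrary functions, let 0 < δ < 1, and let w > √e. Let K be an integer with K ≥ 3 and K ≥ (log(#S) + log(δ⁻¹)) / log(w/√e). Let Z₁,…,Z_K be independent random vectors, each distributed according to the multivariate Gaussian N(0,Σ), and define the random error estimator Δ(μ) = √( (1/K) ∑_{i=1}^K (Z_iᵀ (u(μ) − ũ(μ)))² ) for μ ∈ S. Then with probability at least 1 − δ it holds simultaneously for every μ ∈ S that w⁻¹ Δ(μ) ≤ ‖u(μ) − ũ(μ)‖_Σ ≤ w Δ(μ). -/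
open MeasureTheory ProbabilityTheory Real Matrix
open scoped ENNReal NNReal

/-- The positive semidefinite square root of a positive semidefinite matrix (removed from
Mathlib; restored here with its former definition). -/
noncomputable def Matrix.PosSemidef.sqrt {n : Type*} [Fintype n] [DecidableEq n]
    {A : Matrix n n ℝ} (hA : A.PosSemidef) : Matrix n n ℝ :=
  (hA.1.eigenvectorUnitary : Matrix n n ℝ) * diagonal ((↑) ∘ (√·) ∘ hA.1.eigenvalues) *
    (star hA.1.eigenvectorUnitary : Matrix n n ℝ)

/-- The multivariate Gaussian measure `N(0, S)` on `ℝ^N` with symmetric positive definite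
covariance matrix `S`: the pushforward of the standard Gaussian product measure under
multiplication by the positive semidefinite square root of `S`. -/
noncomputable def multivariateGaussian {N : ℕ} (S : Matrix (Fin N) (Fin N) ℝ)
    (hS : S.PosDef) : Measure (Fin N → ℝ) :=
  (Measure.pi fun _ : Fin N => gaussianReal 0 1).map
    (fun z => hS.posSemidef.sqrt.mulVec z)

/-- The norm `‖v‖_S = √(vᵀ S v)` induced by a positive definite matrix `S`. -/
noncomputable def sigmaNorm {N : ℕ} (S : Matrix (Fin N) (Fin N) ℝ) (v : Fin N → ℝ) : ℝ :=
  Real.sqrt (v ⬝ᵥ S.mulVec v)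

lemma lemG (A c t : ℝ) (h : 2 * t * c ^ 2 < 1) :
    ∫⁻ y, ENNReal.ofReal (rexp (t * (A + c * y) ^ 2)) ∂(gaussianReal 0 1) =
      ENNReal.ofReal ((Real.sqrt (1 - 2 * t * c ^ 2))⁻¹ *
        rexp (t * A ^ 2 / (1 - 2 * t * c ^ 2))) := by
  have hp : (0:ℝ) < 1 / 2 - t * c ^ 2 := by linarith
  set p : ℝ := 1 / 2 - t * c ^ 2 with hp_def
  have hp' : p ≠ 0 := ne_of_gt hp
  have h2p : 1 - 2 * t * c ^ 2 = 2 * p := by rw [hp_def]; ring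
  set m : ℝ := t * A * c / p with hm_def
  have key : ∀ y : ℝ, gaussianPDFReal 0 1 y * rexp (t * (A + c * y) ^ 2)
      = ((Real.sqrt (2 * π))⁻¹ * rexp (t * A ^ 2 / (2 * p))) * rexp (-p * (y - m) ^ 2) := by
    intro y
    simp only [gaussianPDFReal, NNReal.coe_one, mul_one, sub_zero]
    rw [mul_assoc, ← Real.exp_add, mul_assoc, ← Real.exp_add]
    congr 2
    rw [hm_def, hp_def]
    have hne2 : (1:ℝ)/2 - t * c ^ 2 ≠ 0 := by intro hx; nlinarith
    have hu : ((1:ℝ)/2 - t * c ^ 2) * ((1:ℝ)/2 - t * c ^ 2)⁻¹ = 1 := mul_inv_cancel₀ hne2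
    have hne4 : (1:ℝ) - 2 * t * c ^ 2 ≠ 0 := by intro hx; nlinarith
    have hu2 : ((1:ℝ) - 2 * t * c ^ 2) * ((1:ℝ) - 2 * t * c ^ 2)⁻¹ = 1 := mul_inv_cancel₀ hne4
    linear_combination (t^2*A^2*c^2*((1:ℝ)/2 - t*c^2)⁻¹ - 2*t*A*c*y - t*A^2
        + t*A^2*((1:ℝ) - 2*t*c^2)⁻¹) * hu - (t*A^2*((1:ℝ)/2 - t*c^2)⁻¹/2) * hu2
  have hmeas : Measurable fun y : ℝ => ENNReal.ofReal (rexp (t * (A + c * y) ^ 2)) := by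
    fun_prop
  rw [gaussianReal_of_var_ne_zero 0 one_ne_zero,
    lintegral_withDensity_eq_lintegral_mul _ (measurable_gaussianPDF 0 1) hmeas]
  have hint : Integrable (fun y : ℝ => gaussianPDFReal 0 1 y * rexp (t * (A + c * y) ^ 2)) := by
    simp only [key]
    exact ((integrable_exp_neg_mul_sq hp).comp_sub_right m).const_mul _
  have hnn : 0 ≤ᵐ[volume] fun y : ℝ => gaussianPDFReal 0 1 y * rexp (t * (A + c * y) ^ 2) :=
    Filter.Eventually.of_forall fun y =>
      mul_nonneg (gaussianPDFReal_nonneg 0 1 y) (Real.exp_nonneg _)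
  have heq := ofReal_integral_eq_lintegral_ofReal hint hnn
  have hI : (∫ y : ℝ, gaussianPDFReal 0 1 y * rexp (t * (A + c * y) ^ 2))
      = (Real.sqrt (1 - 2 * t * c ^ 2))⁻¹ * rexp (t * A ^ 2 / (1 - 2 * t * c ^ 2)) := by
    simp only [key]
    rw [integral_const_mul, integral_sub_right_eq_self (μ := volume)
      (fun y => rexp (-p * y ^ 2)) m, integral_gaussian, h2p]
    have hπ : (0:ℝ) < π := pi_pos
    have h1 : Real.sqrt (π / p) = Real.sqrt π / Real.sqrt p := Real.sqrt_div hπ.le p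
    have h2 : Real.sqrt (2 * π) = Real.sqrt 2 * Real.sqrt π := Real.sqrt_mul (by norm_num) π
    have h3 : Real.sqrt (2 * p) = Real.sqrt 2 * Real.sqrt p := Real.sqrt_mul (by norm_num) p
    have hsp : Real.sqrt p ≠ 0 := by positivity
    have hsπ : Real.sqrt π ≠ 0 := by positivity
    rw [h1, h2, h3]
    field_simp
  simp only [Pi.mul_apply, gaussianPDF]
  simp_rw [← ENNReal.ofReal_mul (gaussianPDFReal_nonneg 0 1 _)]
  rw [← heq, hI]

lemma lemM (n : ℕ) : ∀ (c : Fin n → ℝ) (t A : ℝ), 2 * t * (∑ i, c i ^ 2) < 1 →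
    ∫⁻ y, ENNReal.ofReal (rexp (t * (A + ∑ i, c i * y i) ^ 2))
        ∂(Measure.pi fun _ : Fin n => gaussianReal 0 1) =
      ENNReal.ofReal ((Real.sqrt (1 - 2 * t * ∑ i, c i ^ 2))⁻¹ *
        rexp (t * A ^ 2 / (1 - 2 * t * ∑ i, c i ^ 2))) := by
  induction n with
  | zero =>
    intro c t A h
    simp [lintegral_const]
  | succ n ih =>
    intro c t A h
    have hD : 0 < 1 - 2 * t * ∑ i, c i ^ 2 := by linarith
    have hsq : (0:ℝ) ≤ ∑ j : Fin n, c j.succ ^ 2 := by positivity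
    have hc0 : (0:ℝ) ≤ c 0 ^ 2 := sq_nonneg _
    have hsum : ∑ i : Fin (n+1), c i ^ 2 = c 0 ^ 2 + ∑ j : Fin n, c j.succ ^ 2 :=
      Fin.sum_univ_succ _
    have hD1 : 0 < 1 - 2 * t * ∑ j : Fin n, c j.succ ^ 2 := by
      rcases le_or_gt t 0 with ht | ht
      · nlinarith
      · nlinarith
    set D1 : ℝ := 1 - 2 * t * ∑ j : Fin n, c j.succ ^ 2 with hD1_def
    set D : ℝ := 1 - 2 * t * ∑ i : Fin (n+1), c i ^ 2 with hD_def
    have hDD1 : D1 - 2 * t * c 0 ^ 2 = D := by rw [hD1_def, hD_def, hsum]; ring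
    set e := MeasurableEquiv.piFinSuccAbove (fun _ : Fin (n+1) => ℝ) 0 with he
    have hmp := measurePreserving_piFinSuccAbove (fun _ : Fin (n+1) => gaussianReal 0 1) 0
    set f : (Fin (n+1) → ℝ) → ℝ≥0∞ :=
      fun y => ENNReal.ofReal (rexp (t * (A + ∑ i, c i * y i) ^ 2)) with hf
    have step1 : ∫⁻ y, f y ∂(Measure.pi fun _ : Fin (n+1) => gaussianReal 0 1)
        = ∫⁻ p, f (e.symm p)
            ∂((gaussianReal 0 1).prod (Measure.pi fun _ : Fin n => gaussianReal 0 1)) := by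
      rw [← hmp.lintegral_comp_emb e.measurableEmbedding (fun p => f (e.symm p))]
      exact lintegral_congr fun a => by rw [MeasurableEquiv.symm_apply_apply]
    have hsymm : ∀ (x : ℝ) (z : Fin n → ℝ),
        (∑ i : Fin (n+1), c i * (e.symm (x, z)) i) = c 0 * x + ∑ j : Fin n, c j.succ * z j := by
      intro x z
      simp [he, MeasurableEquiv.piFinSuccAbove_symm_apply, Fin.insertNth_zero,
        Fin.sum_univ_succ]
    show (∫⁻ y, f y ∂_) = _
    rw [step1, lintegral_prod _ (by fun_prop)]
    set t' : ℝ := t / D1 with ht'_def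
    have hcond : 2 * t' * c 0 ^ 2 < 1 := by
      rw [ht'_def, show 2 * (t/D1) * c 0 ^ 2 = (2 * t * c 0 ^ 2)/D1 by ring, div_lt_one hD1]
      linarith
    have inner : ∀ x : ℝ, (∫⁻ z, f (e.symm (x, z))
          ∂(Measure.pi fun _ : Fin n => gaussianReal 0 1))
        = ENNReal.ofReal ((Real.sqrt D1)⁻¹) *
            ENNReal.ofReal (rexp (t' * (A + c 0 * x) ^ 2)) := by
      intro x
      have : ∀ z : Fin n → ℝ, f (e.symm (x, z)) =
          ENNReal.ofReal (rexp (t * ((A + c 0 * x) + ∑ j : Fin n, c j.succ * z j) ^ 2)) := by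
        intro z
        rw [hf]
        simp only [hsymm x z, add_assoc]
      simp_rw [this]
      rw [ih (fun j => c j.succ) t (A + c 0 * x) (by rw [hD1_def] at hD1; linarith)]
      rw [← ENNReal.ofReal_mul (by positivity)]
      congr 2
      rw [ht'_def]
      field_simp
      congr 1
      rw [hD1_def]
      ring
    simp_rw [inner]
    rw [lintegral_const_mul _ (by fun_prop), lemG A (c 0) t' hcond,
      ← ENNReal.ofReal_mul (by positivity)]
    congr 1
    have h1 : 1 - 2 * t' * c 0 ^ 2 = D / D1 := by
      rw [ht'_def]
      field_simp
      linarith [hDD1]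
    rw [h1]
    have hDpos : 0 < D := hD
    have hs1 : Real.sqrt (D / D1) = Real.sqrt D / Real.sqrt D1 := Real.sqrt_div hDpos.le _
    have hsD1 : Real.sqrt D1 ≠ 0 := by positivity
    have hsD : Real.sqrt D ≠ 0 := by positivity
    rw [hs1]
    rw [show t' * A ^ 2 / (D / D1) = t * A ^ 2 / D by rw [ht'_def]; field_simp]
    field_simp

lemma lemP {α : Type*} [MeasurableSpace α] (ν : Measure α) [IsProbabilityMeasure ν]
    (g : α → ℝ≥0∞) (hg : Measurable g) (k : ℕ) :
    ∫⁻ f, ∏ i : Fin k, g (f i) ∂(Measure.pi fun _ : Fin k => ν) = (∫⁻ x, g x ∂ν) ^ k := by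
  induction k with
  | zero => simp
  | succ k ihk =>
    set e := MeasurableEquiv.piFinSuccAbove (fun _ : Fin (k+1) => α) 0 with he
    have hmp := measurePreserving_piFinSuccAbove (fun _ : Fin (k+1) => ν) 0
    set F : (Fin (k+1) → α) → ℝ≥0∞ := fun f => ∏ i : Fin (k+1), g (f i) with hF
    have step1 : ∫⁻ f, F f ∂(Measure.pi fun _ : Fin (k+1) => ν)
        = ∫⁻ p, F (e.symm p) ∂(ν.prod (Measure.pi fun _ : Fin k => ν)) := by
      rw [← hmp.lintegral_comp_emb e.measurableEmbedding (fun p => F (e.symm p))]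
      exact lintegral_congr fun a => by rw [MeasurableEquiv.symm_apply_apply]
    have hsymm : ∀ (x : α) (z : Fin k → α),
        F (e.symm (x, z)) = g x * ∏ j : Fin k, g (z j) := by
      intro x z
      rw [hF]
      simp [he, MeasurableEquiv.piFinSuccAbove_symm_apply, Fin.insertNth_zero,
        Fin.prod_univ_succ]
    show (∫⁻ f, F f ∂_) = _
    rw [step1, lintegral_prod _ (by fun_prop)]
    simp_rw [hsymm]
    have hmeasprod : Measurable fun z : Fin k → α => ∏ j : Fin k, g (z j) := by fun_prop
    have inner : ∀ x : α, (∫⁻ z, g x * ∏ j : Fin k, g (z j)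
          ∂(Measure.pi fun _ : Fin k => ν)) = g x * (∫⁻ y, g y ∂ν) ^ k := by
      intro x
      rw [lintegral_const_mul _ hmeasprod, ihk]
    simp_rw [inner]
    rw [lintegral_mul_const _ hg, pow_succ, mul_comm]

lemma log_le_div_e {x : ℝ} (hx0 : 0 < x) : Real.log x ≤ x / rexp 1 := by
  have h1 : Real.log (x / rexp 1) ≤ x / rexp 1 - 1 :=
    Real.log_le_sub_one_of_pos (by positivity)
  rw [Real.log_div (ne_of_gt hx0) (ne_of_gt (Real.exp_pos 1)), Real.log_exp] at h1
  linarith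

lemma core_ineq {x : ℝ} (hx : rexp 1 ≤ x) :
    x ^ 3 * rexp (-(3 * x / 2)) + rexp (-(3 / (2 * x))) ≤ 1 := by
  have he9 : (2.7182818 : ℝ) < rexp 1 := by
    have := Real.exp_one_gt_d9
    linarith
  have hx27 : (2.7182818 : ℝ) ≤ x := le_trans he9.le hx
  have hx0 : (0:ℝ) < x := by linarith
  -- part 1 : x^3 e^{-3x/2} ≤ 1/x
  have h4 : 4 * Real.log x ≤ 3 * x / 2 := by
    have h1 := log_le_div_e hx0
    have h2 : x / rexp 1 ≤ x / (27/10) := by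
      gcongr
      linarith
    have h3 : x / (27/10) = (10/27) * x := by ring
    linarith
  have hx4 : x ^ 4 ≤ rexp (3 * x / 2) := by
    have hlx : x ^ 4 = rexp (Real.log (x ^ 4)) := (Real.exp_log (by positivity)).symm
    rw [hlx, Real.log_pow]
    exact Real.exp_le_exp.2 (by push_cast; linarith)
  have part1 : x ^ 3 * rexp (-(3 * x / 2)) ≤ 1 / x := by
    rw [Real.exp_neg, ← div_eq_mul_inv, div_le_div_iff₀ (Real.exp_pos _) hx0]
    nlinarith [hx4]
  -- part 2 : exp(-3/(2x)) ≤ 1 - 1/x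
  set s : ℝ := 3 / (2 * x) with hs_def
  have hs0 : 0 < s := by rw [hs_def]; positivity
  have hs1 : s ≤ 0.552 := by
    rw [hs_def, div_le_iff₀ (by positivity)]
    nlinarith
  have habs : |(-s)| ≤ 1 := by rw [abs_neg, abs_of_pos hs0]; linarith
  have hb := Real.exp_bound habs (by norm_num : 0 < 4)
  have hsum : ∑ i ∈ Finset.range 4, (-s) ^ i / (Nat.factorial i : ℝ)
      = 1 - s + s ^ 2 / 2 - s ^ 3 / 6 := by
    simp [Finset.sum_range_succ, Nat.factorial]
    ring
  have hEb : rexp (-s) ≤ 1 - s + s ^ 2 / 2 - s ^ 3 / 6 + s ^ 4 * (5 / 96) := by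
    have h1 := (abs_le.1 hb).2
    rw [hsum, abs_neg, abs_of_pos hs0] at h1
    norm_num [Nat.factorial] at h1
    linarith
  have hgoal2 : rexp (-s) ≤ 1 - 1 / x := by
    have h1x : 1 / x = (2 / 3) * s := by rw [hs_def]; field_simp
    rw [h1x]
    nlinarith [hEb, hs0, hs1, sq_nonneg s, mul_pos hs0 hs0,
      mul_nonneg (mul_nonneg hs0.le hs0.le) hs0.le,
      mul_nonneg (mul_nonneg (mul_nonneg hs0.le hs0.le) hs0.le) (sub_nonneg.2 hs1),
      mul_nonneg (mul_nonneg hs0.le hs0.le) (sub_nonneg.2 hs1),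
      mul_nonneg hs0.le (sub_nonneg.2 hs1)]
  linarith

lemma tail_sum {x : ℝ} (hx : rexp 1 ≤ x) {K : ℕ} (hK3 : 3 ≤ K) :
    (x * rexp (-(x / 2))) ^ K + (rexp (-(1 / (2 * x)))) ^ K ≤ 1 := by
  have hx0 : (0:ℝ) < x := lt_of_lt_of_le (Real.exp_pos 1) hx
  have hα0 : 0 ≤ x * rexp (-(x / 2)) := by positivity
  have hα1 : x * rexp (-(x / 2)) ≤ 1 := by
    have hlog : Real.log x ≤ x / 2 := by
      have h1 := log_le_div_e hx0
      have h2 : x / rexp 1 ≤ x / 2 := by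
        gcongr
        have := Real.exp_one_gt_d9; linarith
      linarith
    have hxe : x ≤ rexp (x / 2) :=
      calc x = rexp (Real.log x) := (Real.exp_log hx0).symm
        _ ≤ rexp (x / 2) := Real.exp_le_exp.2 hlog
    calc x * rexp (-(x / 2)) ≤ rexp (x / 2) * rexp (-(x / 2)) :=
          mul_le_mul_of_nonneg_right hxe (Real.exp_nonneg _)
      _ = 1 := by rw [← Real.exp_add]; norm_num
  have hβ1 : rexp (-(1 / (2 * x))) ≤ 1 := Real.exp_le_one_iff.2 (neg_nonpos.2 (by positivity))
  have h3a : (x * rexp (-(x / 2))) ^ K ≤ (x * rexp (-(x / 2))) ^ 3 :=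
    pow_le_pow_of_le_one hα0 hα1 hK3
  have h3b : (rexp (-(1 / (2 * x)))) ^ K ≤ (rexp (-(1 / (2 * x)))) ^ 3 :=
    pow_le_pow_of_le_one (Real.exp_nonneg _) hβ1 hK3
  have hcube : ∀ y : ℝ, (rexp y) ^ 3 = rexp (3 * y) := by
    intro y
    rw [pow_succ, pow_succ, pow_one, ← Real.exp_add, ← Real.exp_add]
    ring_nf
  have ha3 : (x * rexp (-(x / 2))) ^ 3 = x ^ 3 * rexp (-(3 * x / 2)) := by
    rw [mul_pow, hcube, show (3:ℝ) * -(x / 2) = -(3 * x / 2) by ring]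
  have hb3 : (rexp (-(1 / (2 * x)))) ^ 3 = rexp (-(3 / (2 * x))) := by
    rw [hcube, show (3:ℝ) * -(1 / (2 * x)) = -(3 / (2 * x)) by ring]
  have := core_ineq hx
  linarith

lemma union_numeric {w δ : ℝ} (hw : Real.sqrt (rexp 1) < w) (hδ0 : 0 < δ) (M : ℕ) (hM : 1 ≤ M)
    {K : ℕ} (hK : (Real.log M + Real.log δ⁻¹) / Real.log (w / Real.sqrt (rexp 1)) ≤ K) :
    (M : ℝ) * (Real.sqrt (rexp 1) / w) ^ K ≤ δ := by
  have hse : 0 < Real.sqrt (rexp 1) := Real.sqrt_pos.2 (Real.exp_pos 1)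
  have hw0 : 0 < w := hse.trans hw
  set r : ℝ := w / Real.sqrt (rexp 1) with hr_def
  have hr1 : 1 < r := (one_lt_div hse).2 hw
  have hlr : 0 < Real.log r := Real.log_pos hr1
  have hK' : Real.log M + Real.log δ⁻¹ ≤ K * Real.log r := by
    rw [div_le_iff₀ hlr] at hK
    linarith
  have hMpos : (0:ℝ) < M := by exact_mod_cast hM
  have key : Real.log ((M : ℝ) * (Real.sqrt (rexp 1) / w) ^ K) ≤ Real.log δ := by
    rw [Real.log_mul (by positivity) (by positivity), Real.log_pow,
      show Real.sqrt (rexp 1) / w = r⁻¹ by rw [hr_def, inv_div], Real.log_inv]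
    rw [Real.log_inv] at hK'
    push_cast
    linarith
  have h2 := Real.exp_le_exp.2 key
  rwa [Real.exp_log (by positivity), Real.exp_log hδ0] at h2

lemma measurable_mulVec' {N : ℕ} (Q : Matrix (Fin N) (Fin N) ℝ) :
    Measurable fun z : Fin N → ℝ => Q.mulVec z := by
  apply measurable_pi_lambda
  intro i
  simp only [Matrix.mulVec, dotProduct]
  fun_prop

lemma psd_sqrt_transpose' {N : ℕ} {S : Matrix (Fin N) (Fin N) ℝ} (hS : S.PosSemidef) :
    hS.sqrtᵀ = hS.sqrt := by
  simp only [Matrix.PosSemidef.sqrt, transpose_mul, diagonal_transpose, Matrix.star_eq_conjTranspose,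
    conjTranspose_eq_transpose_of_trivial, transpose_transpose, Matrix.mul_assoc]

lemma psd_sqrt_mul_self' {N : ℕ} {S : Matrix (Fin N) (Fin N) ℝ} (hS : S.PosSemidef) :
    hS.sqrt * hS.sqrt = S := by
  have hU : (star hS.1.eigenvectorUnitary : Matrix (Fin N) (Fin N) ℝ) *
      (hS.1.eigenvectorUnitary : Matrix (Fin N) (Fin N) ℝ) = 1 := Unitary.coe_star_mul_self _
  have hD : diagonal (((↑) ∘ (√·) ∘ hS.1.eigenvalues : Fin N → ℝ)) *
      diagonal ((↑) ∘ (√·) ∘ hS.1.eigenvalues) = diagonal (RCLike.ofReal ∘ hS.1.eigenvalues) := by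
    rw [diagonal_mul_diagonal]
    congr 1
    funext i
    simp [Real.mul_self_sqrt (hS.eigenvalues_nonneg i)]
  conv_rhs => rw [hS.1.spectral_theorem, Unitary.conjStarAlgAut_apply]
  simp only [Matrix.PosSemidef.sqrt, Matrix.mul_assoc]
  rw [← Matrix.mul_assoc (star _) (hS.1.eigenvectorUnitary : Matrix (Fin N) (Fin N) ℝ), hU,
    Matrix.one_mul, ← Matrix.mul_assoc (diagonal _) (diagonal _), hD]

lemma lemJ {N : ℕ} (S : Matrix (Fin N) (Fin N) ℝ) (hS : S.PosDef) (v : Fin N → ℝ) (t : ℝ)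
    (h : 2 * t * (v ⬝ᵥ S.mulVec v) < 1) :
    ∫⁻ z, ENNReal.ofReal (rexp (t * (z ⬝ᵥ v) ^ 2)) ∂(multivariateGaussian S hS)
      = ENNReal.ofReal ((Real.sqrt (1 - 2 * t * (v ⬝ᵥ S.mulVec v)))⁻¹) := by
  set Q := hS.posSemidef.sqrt with hQ
  have hQsym : Qᵀ = Q := by
    exact psd_sqrt_transpose' hS.posSemidef
  set c : Fin N → ℝ := Q.mulVec v with hc
  have hcc : ∑ i, c i ^ 2 = v ⬝ᵥ S.mulVec v := by
    have h1 : ∑ i, c i ^ 2 = c ⬝ᵥ c := by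
      simp [dotProduct, sq]
    rw [h1, hc, Matrix.dotProduct_mulVec, ← Matrix.mulVec_transpose, hQsym,
      Matrix.mulVec_mulVec, psd_sqrt_mul_self' hS.posSemidef, dotProduct_comm]
  have hmap : ∀ y : Fin N → ℝ, (Q.mulVec y) ⬝ᵥ v = ∑ i, c i * y i := by
    intro y
    rw [dotProduct_comm, Matrix.dotProduct_mulVec, hc,
      ← Matrix.mulVec_transpose, hQsym]
    simp [dotProduct]
  have hdot : Measurable fun z : Fin N → ℝ => z ⬝ᵥ v := by
    simp only [dotProduct]
    fun_prop
  rw [_root_.multivariateGaussian,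
    lintegral_map (((hdot.pow_const 2).const_mul t).exp.ennreal_ofReal) (measurable_mulVec' Q)]
  simp_rw [hmap]
  have := lemM N c t 0 (by rw [hcc]; exact h)
  simp only [zero_add, ne_eq, OfNat.ofNat_ne_zero, not_false_eq_true, zero_pow, zero_mul,
    zero_div, Real.exp_zero, mul_one] at this
  rw [this, hcc]
  norm_num

lemma sqrt_exp_one : Real.sqrt (rexp 1) = rexp (1/2) := by
  rw [show rexp 1 = rexp (1/2) ^ 2 by rw [sq, ← Real.exp_add]; norm_num,
    Real.sqrt_sq (Real.exp_nonneg _)]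

lemma perMu {N : ℕ} (S : Matrix (Fin N) (Fin N) ℝ) (hS : S.PosDef) (v : Fin N → ℝ)
    {K : ℕ} (hK3 : 3 ≤ K) {w : ℝ} (hw : Real.sqrt (rexp 1) < w) :
    (Measure.pi fun _ : Fin K => multivariateGaussian S hS)
      {Z | ¬(w⁻¹ * Real.sqrt ((1 / K) * ∑ i, (Z i ⬝ᵥ v) ^ 2) ≤ Real.sqrt (v ⬝ᵥ S.mulVec v) ∧
           Real.sqrt (v ⬝ᵥ S.mulVec v) ≤ w * Real.sqrt ((1 / K) * ∑ i, (Z i ⬝ᵥ v) ^ 2))}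
      ≤ ENNReal.ofReal ((Real.sqrt (rexp 1) / w) ^ K) := by
  haveI : IsProbabilityMeasure (multivariateGaussian S hS) := by
    unfold _root_.multivariateGaussian
    exact Measure.isProbabilityMeasure_map (measurable_mulVec' _).aemeasurable
  have hse : 0 < Real.sqrt (rexp 1) := Real.sqrt_pos.2 (Real.exp_pos 1)
  have hw0 : 0 < w := hse.trans hw
  set P := Measure.pi fun _ : Fin K => multivariateGaussian S hS with hP_def
  by_cases hv : v = 0
  · subst hv
    have hempty : {Z : Fin K → Fin N → ℝ |
        ¬(w⁻¹ * Real.sqrt ((1 / K) * ∑ i, (Z i ⬝ᵥ (0 : Fin N → ℝ)) ^ 2) ≤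
            Real.sqrt ((0 : Fin N → ℝ) ⬝ᵥ S.mulVec 0) ∧
          Real.sqrt ((0 : Fin N → ℝ) ⬝ᵥ S.mulVec 0) ≤
            w * Real.sqrt ((1 / K) * ∑ i, (Z i ⬝ᵥ (0 : Fin N → ℝ)) ^ 2))} = ∅ := by
      ext Z
      simp [dotProduct_zero]
    rw [hempty, measure_empty]
    exact zero_le
  have hσ2 : 0 < v ⬝ᵥ S.mulVec v := by
    have := hS.dotProduct_mulVec_pos hv
    simpa using this
  set σ2 : ℝ := v ⬝ᵥ S.mulVec v with hσ2_def
  set x : ℝ := w ^ 2 with hx_def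
  have hex : rexp 1 < x := by
    calc rexp 1 = (Real.sqrt (rexp 1)) ^ 2 := (Real.sq_sqrt (Real.exp_pos 1).le).symm
      _ < w ^ 2 := by gcongr
  have hx1 : 1 < x := lt_trans (by linarith [Real.add_one_le_exp (1:ℝ)]) hex
  have hx0 : (0:ℝ) < x := by linarith
  have hwx : Real.sqrt x = w := by rw [hx_def, Real.sqrt_sq hw0.le]
  set T : (Fin K → Fin N → ℝ) → ℝ := fun Z => ∑ i, (Z i ⬝ᵥ v) ^ 2 with hT_def
  have hTmeas : Measurable T := by
    rw [hT_def]
    simp only [dotProduct]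
    fun_prop
  have hgmeas : Measurable fun z : Fin N → ℝ => z ⬝ᵥ v := by
    simp only [dotProduct]; fun_prop
  -- MGF computation
  have hMGF : ∀ t : ℝ, 2 * t * σ2 < 1 →
      ∫⁻ Z, ENNReal.ofReal (rexp (t * T Z)) ∂P
        = ENNReal.ofReal (((Real.sqrt (1 - 2 * t * σ2))⁻¹) ^ K) := by
    intro t ht
    have hrw : ∀ Z : Fin K → Fin N → ℝ, ENNReal.ofReal (rexp (t * T Z))
        = ∏ i : Fin K, ENNReal.ofReal (rexp (t * (Z i ⬝ᵥ v) ^ 2)) := by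
      intro Z
      rw [hT_def, Finset.mul_sum, Real.exp_sum, ← ENNReal.ofReal_prod_of_nonneg]
      intro i _
      exact Real.exp_nonneg _
    simp_rw [hrw]
    rw [hP_def, lemP (multivariateGaussian S hS)
        (fun z => ENNReal.ofReal (rexp (t * (z ⬝ᵥ v) ^ 2)))
        (((hgmeas.pow_const 2).const_mul t).exp.ennreal_ofReal) K,
      lemJ S hS v t ht, ← ENNReal.ofReal_pow (by positivity)]
  -- generic Chernoff bound
  have tail : ∀ t b : ℝ, 2 * t * σ2 < 1 →
      P {Z | rexp (t * b) ≤ rexp (t * T Z)} ≤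
        ENNReal.ofReal ((Real.sqrt (1 - 2 * t * σ2))⁻¹ ^ K / rexp (t * b)) := by
    intro t b ht
    have hmf : AEMeasurable (fun Z => ENNReal.ofReal (rexp (t * T Z))) P :=
      ((hTmeas.const_mul t).exp.ennreal_ofReal).aemeasurable
    have hmarkov := mul_meas_ge_le_lintegral₀ hmf (ENNReal.ofReal (rexp (t * b)))
    rw [hMGF t ht] at hmarkov
    have hset : {Z : Fin K → Fin N → ℝ | rexp (t * b) ≤ rexp (t * T Z)}
        = {Z | ENNReal.ofReal (rexp (t * b)) ≤ ENNReal.ofReal (rexp (t * T Z))} := by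
      ext Z
      simp [ENNReal.ofReal_le_ofReal_iff (Real.exp_nonneg _)]
    rw [hset, ENNReal.ofReal_div_of_pos (Real.exp_pos _),
      ENNReal.le_div_iff_mul_le
        (Or.inl (ENNReal.ofReal_pos.2 (Real.exp_pos _)).ne') (Or.inl ENNReal.ofReal_ne_top),
      mul_comm]
    exact hmarkov
  -- upper tail
  have hσ2' : σ2 ≠ 0 := ne_of_gt hσ2
  have hx0' : x ≠ 0 := ne_of_gt hx0
  set tu : ℝ := (1 - x⁻¹) / (2 * σ2) with htu_def
  have h2tu : 1 - 2 * tu * σ2 = x⁻¹ := by rw [htu_def]; field_simp; ring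
  have hcondu : 2 * tu * σ2 < 1 := by
    have : 0 < x⁻¹ := by positivity
    linarith [h2tu]
  have htu0 : 0 ≤ tu := by
    rw [htu_def]
    have hxi : x⁻¹ ≤ 1 := by rw [inv_le_one_iff₀]; right; linarith
    apply div_nonneg <;> linarith
  have hBu : P {Z | K * (x * σ2) < T Z} ≤
      ENNReal.ofReal ((x * rexp (-(x / 2))) ^ K * (Real.sqrt (rexp 1) / w) ^ K) := by
    have hsub : {Z : Fin K → Fin N → ℝ | K * (x * σ2) < T Z} ⊆
        {Z | rexp (tu * (K * (x * σ2))) ≤ rexp (tu * T Z)} := fun Z hZ =>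
      Real.exp_le_exp.2 (mul_le_mul_of_nonneg_left (le_of_lt hZ) htu0)
    refine le_trans (measure_mono hsub) (le_trans (tail tu (K * (x * σ2)) hcondu) ?_)
    apply le_of_eq
    congr 1
    rw [h2tu, Real.sqrt_inv, inv_inv]
    have hexp : tu * (K * (x * σ2)) = K * ((x - 1) / 2) := by
      rw [htu_def]; field_simp
    rw [hexp, show rexp (K * ((x - 1) / 2)) = (rexp ((x - 1) / 2)) ^ K from by
      rw [← Real.exp_nat_mul], ← div_pow, ← mul_pow]
    congr 1
    rw [sqrt_exp_one, ← hwx]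
    have h1 : x * (Real.sqrt x)⁻¹ = Real.sqrt x := by rw [← div_eq_mul_inv, Real.div_sqrt]
    have h2 : rexp (-(x / 2)) * rexp (1 / 2) = rexp ((1 - x) / 2) := by
      rw [← Real.exp_add]; ring_nf
    calc Real.sqrt x / rexp ((x - 1) / 2)
        = Real.sqrt x * rexp ((1 - x) / 2) := by
          rw [div_eq_mul_inv, ← Real.exp_neg, show -((x - 1) / 2) = (1 - x) / 2 by ring]
      _ = (x * (Real.sqrt x)⁻¹) * (rexp (-(x / 2)) * rexp (1 / 2)) := by rw [h1, h2]
      _ = x * rexp (-(x / 2)) * (rexp (1 / 2) / Real.sqrt x) := by ring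
  -- lower tail
  set tl : ℝ := (1 - x) / (2 * σ2) with htl_def
  have h2tl : 1 - 2 * tl * σ2 = x := by rw [htl_def]; field_simp; ring
  have hcondl : 2 * tl * σ2 < 1 := by linarith [h2tl]
  have htl0 : tl ≤ 0 := by
    rw [htl_def]
    apply div_nonpos_of_nonpos_of_nonneg <;> linarith
  have hBl : P {Z | T Z < K * (σ2 / x)} ≤
      ENNReal.ofReal ((rexp (-(1 / (2 * x)))) ^ K * (Real.sqrt (rexp 1) / w) ^ K) := by
    have hsub : {Z : Fin K → Fin N → ℝ | T Z < K * (σ2 / x)} ⊆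
        {Z | rexp (tl * (K * (σ2 / x))) ≤ rexp (tl * T Z)} := fun Z hZ =>
      Real.exp_le_exp.2 (mul_le_mul_of_nonpos_left (le_of_lt hZ) htl0)
    refine le_trans (measure_mono hsub) (le_trans (tail tl (K * (σ2 / x)) hcondl) ?_)
    apply le_of_eq
    congr 1
    rw [h2tl]
    have hexp : tl * (K * (σ2 / x)) = K * ((1 - x) / (2 * x)) := by
      rw [htl_def]; field_simp
    rw [hexp, show rexp (K * ((1 - x) / (2 * x))) = (rexp ((1 - x) / (2 * x))) ^ K from by
      rw [← Real.exp_nat_mul], ← div_pow, ← mul_pow]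
    congr 1
    rw [sqrt_exp_one, ← hwx]
    have h2 : rexp (-(1 / (2 * x))) * rexp (1 / 2) = rexp ((x - 1) / (2 * x)) := by
      rw [← Real.exp_add]
      congr 1
      field_simp
      ring
    calc (Real.sqrt x)⁻¹ / rexp ((1 - x) / (2 * x))
        = (Real.sqrt x)⁻¹ * rexp ((x - 1) / (2 * x)) := by
          rw [div_eq_mul_inv, ← Real.exp_neg, show -((1 - x) / (2 * x)) = (x - 1) / (2 * x) by ring]
      _ = rexp (-(1 / (2 * x))) * (rexp (1 / 2) / Real.sqrt x) := by rw [← h2]; ring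
  -- combine
  have hsub2 : {Z : Fin K → Fin N → ℝ |
      ¬(w⁻¹ * Real.sqrt ((1 / K) * ∑ i, (Z i ⬝ᵥ v) ^ 2) ≤ Real.sqrt σ2 ∧
        Real.sqrt σ2 ≤ w * Real.sqrt ((1 / K) * ∑ i, (Z i ⬝ᵥ v) ^ 2))} ⊆
      {Z | K * (x * σ2) < T Z} ∪ {Z | T Z < K * (σ2 / x)} := by
    intro Z hZ
    by_contra hcon
    rw [Set.mem_union] at hcon
    push_neg at hcon
    obtain ⟨h1', h2'⟩ := hcon
    rw [Set.mem_setOf_eq, not_lt] at h1' h2'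
    apply hZ
    have hK0 : (0:ℝ) < K := by
      have : (0:ℕ) < K := by omega
      exact_mod_cast this
    have hK0' : (K:ℝ) ≠ 0 := ne_of_gt hK0
    have hTZ : T Z = ∑ i, (Z i ⬝ᵥ v) ^ 2 := rfl
    constructor
    · rw [inv_mul_le_iff₀ hw0, ← hTZ]
      have hle : (1 / K) * T Z ≤ x * σ2 := by
        rw [div_mul_eq_mul_div, div_le_iff₀ hK0]
        linarith [h1']
      calc Real.sqrt ((1 / K) * T Z) ≤ Real.sqrt (x * σ2) := Real.sqrt_le_sqrt hle
        _ = w * Real.sqrt σ2 := by rw [Real.sqrt_mul hx0.le, hwx]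
    · rw [← hTZ]
      have hle : σ2 ≤ x * ((1 / K) * T Z) := by
        have h := mul_le_mul_of_nonneg_left h2' (by positivity : (0:ℝ) ≤ x / K)
        have e1 : x / K * (K * (σ2 / x)) = σ2 := by field_simp
        have e2 : x / K * T Z = x * ((1 / K) * T Z) := by ring
        rw [e1, e2] at h
        exact h
      calc Real.sqrt σ2 ≤ Real.sqrt (x * ((1 / K) * T Z)) := Real.sqrt_le_sqrt hle
        _ = w * Real.sqrt ((1 / K) * T Z) := by
          rw [Real.sqrt_mul hx0.le, hwx]
  refine le_trans (measure_mono hsub2) (le_trans (measure_union_le _ _) ?_)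
  refine le_trans (add_le_add hBu hBl) ?_
  rw [← ENNReal.ofReal_add (by positivity) (by positivity), ← add_mul]
  apply ENNReal.ofReal_le_ofReal
  calc ((x * rexp (-(x / 2))) ^ K + (rexp (-(1 / (2 * x)))) ^ K) * (Real.sqrt (rexp 1) / w) ^ K
      ≤ 1 * (Real.sqrt (rexp 1) / w) ^ K := by
        apply mul_le_mul_of_nonneg_right (tail_sum hex.le hK3) (by positivity)
    _ = (Real.sqrt (rexp 1) / w) ^ K := one_mul _

theorem randomized_error_estimator_finite_parameter_set {N : ℕ}
    (S : Matrix (Fin N) (Fin N) ℝ) (hS : S.PosDef)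
    {ι : Type*} [Fintype ι] [Nonempty ι]
    (u : ι → Fin N → ℝ) (util : ι → Fin N → ℝ)
    (δ : ℝ) (hδ0 : 0 < δ) (hδ1 : δ < 1)
    (w : ℝ) (hw : Real.sqrt (Real.exp 1) < w)
    (K : ℕ) (hK3 : 3 ≤ K)
    (hK : (Real.log (Fintype.card ι) + Real.log δ⁻¹)
            / Real.log (w / Real.sqrt (Real.exp 1)) ≤ K)
    (Δ : (Fin K → Fin N → ℝ) → ι → ℝ)
    (hΔ : ∀ Z μ, Δ Z μ = Real.sqrt ((1 / K) * ∑ i, (Z i ⬝ᵥ (u μ - util μ)) ^ 2)) :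
    1 - ENNReal.ofReal δ ≤
      (Measure.pi fun _ : Fin K => multivariateGaussian S hS)
        {Z | ∀ μ : ι, w⁻¹ * Δ Z μ ≤ sigmaNorm S (u μ - util μ) ∧
             sigmaNorm S (u μ - util μ) ≤ w * Δ Z μ} := by
  classical
  haveI : IsProbabilityMeasure (multivariateGaussian S hS) := by
    unfold _root_.multivariateGaussian
    exact Measure.isProbabilityMeasure_map (measurable_mulVec' _).aemeasurable
  set P := Measure.pi fun _ : Fin K => multivariateGaussian S hS with hP_def
  set G : Set (Fin K → Fin N → ℝ) :=
    {Z | ∀ μ : ι, w⁻¹ * Δ Z μ ≤ sigmaNorm S (u μ - util μ) ∧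
         sigmaNorm S (u μ - util μ) ≤ w * Δ Z μ} with hG_def
  set Bad : ι → Set (Fin K → Fin N → ℝ) := fun μ => {Z |
    ¬(w⁻¹ * Real.sqrt ((1 / K) * ∑ i, (Z i ⬝ᵥ (u μ - util μ)) ^ 2) ≤
        Real.sqrt ((u μ - util μ) ⬝ᵥ S.mulVec (u μ - util μ)) ∧
      Real.sqrt ((u μ - util μ) ⬝ᵥ S.mulVec (u μ - util μ)) ≤
        w * Real.sqrt ((1 / K) * ∑ i, (Z i ⬝ᵥ (u μ - util μ)) ^ 2))} with hBad_def
  rw [tsub_le_iff_right]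
  have hG : ∀ Z, Z ∉ ⋃ μ : ι, Bad μ → Z ∈ G := by
    intro Z hZ μ
    have hnb : Z ∉ Bad μ := fun h => hZ (Set.mem_iUnion.2 ⟨μ, h⟩)
    rw [hBad_def] at hnb
    simp only [Set.mem_setOf_eq, not_not] at hnb
    rw [hΔ]
    unfold sigmaNorm
    exact hnb
  have hBadBound : P (⋃ μ : ι, Bad μ) ≤ ENNReal.ofReal δ := by
    refine le_trans (measure_iUnion_fintype_le P Bad) ?_
    have hper : ∀ μ : ι, P (Bad μ) ≤
        ENNReal.ofReal ((Real.sqrt (rexp 1) / w) ^ K) := fun μ =>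
      perMu S hS (u μ - util μ) hK3 hw
    calc ∑ μ : ι, P (Bad μ)
        ≤ ∑ _μ : ι, ENNReal.ofReal ((Real.sqrt (rexp 1) / w) ^ K) :=
          Finset.sum_le_sum fun μ _ => hper μ
      _ = (Fintype.card ι) * ENNReal.ofReal ((Real.sqrt (rexp 1) / w) ^ K) := by
          rw [Finset.sum_const, nsmul_eq_mul, Finset.card_univ]
      _ = ENNReal.ofReal ((Fintype.card ι) * (Real.sqrt (rexp 1) / w) ^ K) := by
          rw [ENNReal.ofReal_mul (by positivity), ENNReal.ofReal_natCast]
      _ ≤ ENNReal.ofReal δ :=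
          ENNReal.ofReal_le_ofReal (union_numeric hw hδ0 _ Fintype.card_pos hK)
  calc (1 : ℝ≥0∞) = P Set.univ := measure_univ.symm
    _ ≤ P (G ∪ ⋃ μ : ι, Bad μ) := measure_mono (fun Z _ => by
        by_cases h : Z ∈ ⋃ μ : ι, Bad μ
        · exact Or.inr h
        · exact Or.inl (hG Z h))
    _ ≤ P G + P (⋃ μ : ι, Bad μ) := measure_union_le _ _
    _ ≤ P G + ENNReal.ofReal δ := add_le_add_right hBadBound _
end

section
/- Let A ∈ ℝ^{N×N} be invertible, let Σ ∈ ℝ^{N×N} be symmetric positive definite, let f ∈ ℝ^N, u = A⁻¹f, and let ũ ∈ ℝ^N with r = f − Aũ. Let Z₁,…,Z_K ∈ ℝ^N be arbitrary vectors, let Y_i = A⁻ᵀZ_i be the exact dual solutions, and let Ỹ₁,…,Ỹ_K ∈ ℝ^N be arbitrary approximate dual solutions. Define Δ = √( (1/K) ∑_{i=1}^K (Y_iᵀ r)² ) and Δ̃ = √( (1/K) ∑_{i=1}^K (Ỹ_iᵀ r)² ). Then |Δ − Δ̃| ≤ ( max_{1≤i≤K} ‖AᵀỸ_i − Z_i‖_{Σ⁻¹}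 ) · ‖u − ũ‖_Σ. -/
open Matrix


/-- Move a matrix across a dot product. -/
lemma dpT {N : ℕ} (M : Matrix (Fin N) (Fin N) ℝ) (x y : Fin N → ℝ) :
    (M.mulVec x) ⬝ᵥ y = x ⬝ᵥ (Mᵀ.mulVec y) := by
  rw [dotProduct_comm, Matrix.dotProduct_mulVec, ← Matrix.mulVec_transpose]
  exact dotProduct_comm _ _

open scoped MatrixOrder in
/-- Cauchy–Schwarz for a positive definite weighting matrix:
`|w ⬝ᵥ e| ≤ ‖w‖_{S⁻¹} ‖e‖_S`. -/
lemma csw {N : ℕ} {S : Matrix (Fin N) (Fin N) ℝ} (hS : S.PosDef) (w e : Fin N → ℝ) :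
    |w ⬝ᵥ e| ≤ Real.sqrt (w ⬝ᵥ S⁻¹.mulVec w) * Real.sqrt (e ⬝ᵥ S.mulVec e) := by
  set B := CFC.sqrt S with hBdef
  have hBB : B * B = S := CFC.sqrt_mul_sqrt_self S hS.posSemidef.nonneg
  have hBsymm : Bᵀ = B := by
    have := (Matrix.nonneg_iff_posSemidef.mp (CFC.sqrt_nonneg S)).1.eq
    rwa [Matrix.conjTranspose_eq_transpose_of_trivial] at this
  have hBdet : IsUnit B.det := by
    have hSdet : (0:ℝ) < S.det := hS.det_pos
    rw [← hBB, Matrix.det_mul] at hSdet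
    have : B.det ≠ 0 := by
      intro h; rw [h] at hSdet; simp at hSdet
    exact this.isUnit
  have hBinv_symm : (B⁻¹)ᵀ = B⁻¹ := by
    rw [Matrix.transpose_nonsing_inv, hBsymm]
  have hinvmul : B⁻¹ * B = 1 := Matrix.nonsing_inv_mul B hBdet
  have h1 : (B⁻¹.mulVec w) ⬝ᵥ (B.mulVec e) = w ⬝ᵥ e := by
    rw [dpT, hBinv_symm, Matrix.mulVec_mulVec, hinvmul, Matrix.one_mulVec]
  have h2 : (B⁻¹.mulVec w) ⬝ᵥ (B⁻¹.mulVec w) = w ⬝ᵥ S⁻¹.mulVec w := by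
    rw [dpT, hBinv_symm, Matrix.mulVec_mulVec, ← Matrix.mul_inv_rev, hBB]
  have h3 : (B.mulVec e) ⬝ᵥ (B.mulVec e) = e ⬝ᵥ S.mulVec e := by
    rw [dpT, hBsymm, Matrix.mulVec_mulVec, hBB]
  set a := B⁻¹.mulVec w with ha
  set b := B.mulVec e with hb
  rw [← h1, ← h2, ← h3]
  have hana : 0 ≤ a ⬝ᵥ a := by
    exact Finset.sum_nonneg fun i _ => mul_self_nonneg _
  have hcs : (a ⬝ᵥ b) ^ 2 ≤ (a ⬝ᵥ a) * (b ⬝ᵥ b) := by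
    have := Finset.sum_mul_sq_le_sq_mul_sq Finset.univ a b
    simpa [dotProduct, pow_two, mul_comm] using this
  have habs : |a ⬝ᵥ b| = Real.sqrt ((a ⬝ᵥ b) ^ 2) := (Real.sqrt_sq_eq_abs _).symm
  rw [habs, ← Real.sqrt_mul hana]
  exact Real.sqrt_le_sqrt hcs

theorem error_estimator_dual_residual_bound {N K : ℕ} [NeZero K]
    (A : Matrix (Fin N) (Fin N) ℝ) (hA : IsUnit A.det)
    (S : Matrix (Fin N) (Fin N) ℝ) (hS : S.PosDef)
    (f : Fin N → ℝ) (util : Fin N → ℝ)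
    (u : Fin N → ℝ) (hu : u = A⁻¹.mulVec f)
    (r : Fin N → ℝ) (hr : r = f - A.mulVec util)
    (Z : Fin K → Fin N → ℝ)
    (Y : Fin K → Fin N → ℝ) (hY : ∀ i, Y i = (Aᵀ)⁻¹.mulVec (Z i))
    (Ytil : Fin K → Fin N → ℝ)
    (Δ : ℝ) (hΔ : Δ = Real.sqrt ((1 / K : ℝ) * ∑ i, (Y i ⬝ᵥ r) ^ 2))
    (Δtil : ℝ) (hΔtil : Δtil = Real.sqrt ((1 / K : ℝ) * ∑ i, (Ytil i ⬝ᵥ r) ^ 2)) :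
    |Δ - Δtil| ≤
      (Finset.univ.sup' Finset.univ_nonempty fun i =>
          Real.sqrt ((Aᵀ.mulVec (Ytil i) - Z i) ⬝ᵥ S⁻¹.mulVec (Aᵀ.mulVec (Ytil i) - Z i)))
        * Real.sqrt ((u - util) ⬝ᵥ S.mulVec (u - util)) := by
  have hKpos : (0:ℝ) < K := by
    have := NeZero.pos K
    exact_mod_cast this
  set M := (Finset.univ.sup' Finset.univ_nonempty fun i =>
      Real.sqrt ((Aᵀ.mulVec (Ytil i) - Z i) ⬝ᵥ S⁻¹.mulVec (Aᵀ.mulVec (Ytil i) - Z i))) with hM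
  set E := Real.sqrt ((u - util) ⬝ᵥ S.mulVec (u - util)) with hE
  have hE0 : 0 ≤ E := Real.sqrt_nonneg _
  -- r = A (u - util)
  have hAu : A.mulVec u = f := by
    rw [hu, Matrix.mulVec_mulVec, Matrix.mul_nonsing_inv _ hA, Matrix.one_mulVec]
  have hrAe : r = A.mulVec (u - util) := by
    rw [hr, Matrix.mulVec_sub, hAu]
  -- key identity for each i
  have key : ∀ i : Fin K, Ytil i ⬝ᵥ r - Y i ⬝ᵥ r
      = (Aᵀ.mulVec (Ytil i) - Z i) ⬝ᵥ (u - util) := by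
    intro i
    have hYr : Y i ⬝ᵥ r = Z i ⬝ᵥ (u - util) := by
      rw [hY i, hrAe, dpT, ← Matrix.transpose_nonsing_inv, Matrix.transpose_transpose,
        Matrix.mulVec_mulVec, Matrix.nonsing_inv_mul _ hA, Matrix.one_mulVec]
    have hYtr : Ytil i ⬝ᵥ r = (Aᵀ.mulVec (Ytil i)) ⬝ᵥ (u - util) := by
      rw [hrAe, dpT Aᵀ (Ytil i) (u - util), Matrix.transpose_transpose]
    rw [hYr, hYtr, sub_dotProduct]
  -- each term bounded by M * E
  have hterm : ∀ i : Fin K, |Ytil i ⬝ᵥ r - Y i ⬝ᵥ r| ≤ M * E := by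
    intro i
    rw [key i]
    calc |(Aᵀ.mulVec (Ytil i) - Z i) ⬝ᵥ (u - util)|
        ≤ Real.sqrt ((Aᵀ.mulVec (Ytil i) - Z i) ⬝ᵥ S⁻¹.mulVec (Aᵀ.mulVec (Ytil i) - Z i)) * E :=
          csw hS _ _
      _ ≤ M * E := by
          apply mul_le_mul_of_nonneg_right _ hE0
          rw [hM]
          exact Finset.le_sup' (fun i => Real.sqrt ((Aᵀ.mulVec (Ytil i) - Z i) ⬝ᵥ S⁻¹.mulVec (Aᵀ.mulVec (Ytil i) - Z i))) (Finset.mem_univ i)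
  have hM0 : 0 ≤ M := by
    rw [hM]
    refine le_trans (Real.sqrt_nonneg ((Aᵀ.mulVec (Ytil (Classical.arbitrary (Fin K))) - Z (Classical.arbitrary (Fin K))) ⬝ᵥ S⁻¹.mulVec (Aᵀ.mulVec (Ytil (Classical.arbitrary (Fin K))) - Z (Classical.arbitrary (Fin K)))))
      (Finset.le_sup' (fun i => Real.sqrt ((Aᵀ.mulVec (Ytil i) - Z i) ⬝ᵥ S⁻¹.mulVec (Aᵀ.mulVec (Ytil i) - Z i))) (Finset.mem_univ (Classical.arbitrary (Fin K))))
  have hME0 : 0 ≤ M * E := mul_nonneg hM0 hE0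
  -- Euclidean space reverse triangle inequality
  set a : EuclideanSpace ℝ (Fin K) := WithLp.toLp 2 (fun i => Y i ⬝ᵥ r) with ha
  set b : EuclideanSpace ℝ (Fin K) := WithLp.toLp 2 (fun i => Ytil i ⬝ᵥ r) with hb
  have hna : ‖a‖ = Real.sqrt (∑ i, (Y i ⬝ᵥ r) ^ 2) := by
    rw [EuclideanSpace.norm_eq]
    congr 1
    exact Finset.sum_congr rfl fun i _ => by simp [ha, Real.norm_eq_abs, sq_abs]
  have hnb : ‖b‖ = Real.sqrt (∑ i, (Ytil i ⬝ᵥ r) ^ 2) := by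
    rw [EuclideanSpace.norm_eq]
    congr 1
    exact Finset.sum_congr rfl fun i _ => by simp [hb, Real.norm_eq_abs, sq_abs]
  have hnab : ‖a - b‖ ≤ Real.sqrt (K : ℝ) * (M * E) := by
    rw [EuclideanSpace.norm_eq]
    have hsum : ∑ i, ‖(a - b) i‖ ^ 2 ≤ ∑ _i : Fin K, (M * E) ^ 2 := by
      apply Finset.sum_le_sum
      intro i _
      have : ‖(a - b) i‖ = |Y i ⬝ᵥ r - Ytil i ⬝ᵥ r| := by
        simp [ha, hb, Real.norm_eq_abs]
      rw [this]
      have h := hterm i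
      rw [abs_sub_comm] at h
      exact pow_le_pow_left₀ (abs_nonneg _) h 2
    calc Real.sqrt (∑ i, ‖(a - b) i‖ ^ 2) ≤ Real.sqrt (∑ _i : Fin K, (M * E) ^ 2) :=
          Real.sqrt_le_sqrt hsum
      _ = Real.sqrt ((K : ℝ) * (M * E) ^ 2) := by rw [Finset.sum_const]; simp [nsmul_eq_mul]
      _ = Real.sqrt (K : ℝ) * (M * E) := by
          rw [Real.sqrt_mul (le_of_lt hKpos), Real.sqrt_sq hME0]
  have hΔa : Δ = Real.sqrt (1 / K : ℝ) * ‖a‖ := by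
    rw [hΔ, hna, ← Real.sqrt_mul (by positivity)]
  have hΔb : Δtil = Real.sqrt (1 / K : ℝ) * ‖b‖ := by
    rw [hΔtil, hnb, ← Real.sqrt_mul (by positivity)]
  have hrev : |‖a‖ - ‖b‖| ≤ ‖a - b‖ := abs_norm_sub_norm_le a b
  calc |Δ - Δtil| = Real.sqrt (1 / K : ℝ) * |‖a‖ - ‖b‖| := by
        rw [hΔa, hΔb, ← mul_sub, abs_mul, abs_of_nonneg (Real.sqrt_nonneg _)]
    _ ≤ Real.sqrt (1 / K : ℝ) * (Real.sqrt (K : ℝ) * (M * E)) := by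
        apply mul_le_mul_of_nonneg_left _ (Real.sqrt_nonneg _)
        exact le_trans hrev hnab
    _ = (Real.sqrt (1 / K : ℝ) * Real.sqrt (K : ℝ)) * (M * E) := by ring
    _ = M * E := by
        rw [← Real.sqrt_mul (by positivity), one_div, inv_mul_cancel₀ (ne_of_gt hKpos),
          Real.sqrt_one, one_mul]
end

section
/- Let A ∈ ℝ^{N×N}, let r ∈ ℝ^N, let Z₁,…,Z_K ∈ ℝ^N, and let 𝒴 ⊆ ℝ^N be a linear subspace. Suppose Ỹ₁,…,Ỹ_K ∈ 𝒴 are Galerkin solutions of the dual problems, i.e. vᵀ(AᵀỸ_i) = vᵀZ_i for all v ∈ 𝒴 and all 1 ≤ i ≤ K, and suppose ẽ ∈ 𝒴 is a Galerkin solution of the error equation, i.e. vᵀ(Aẽ) = vᵀr for all v ∈ 𝒴. Then Ỹ_iᵀ r = Z_iᵀ ẽ for every 1 ≤ i ≤ K, and consequently √( (1/K) ∑_{i=1}^K (Ỹ_iᵀ r)² ) = √( (1/K) ∑_{i=1}^K (Z_iᵀ ẽ)² ). -/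
open Matrix

theorem galerkin_dual_primal_duality {N K : ℕ}
    (A : Matrix (Fin N) (Fin N) ℝ) (r : Fin N → ℝ)
    (Z : Fin K → Fin N → ℝ)
    (Y : Submodule ℝ (Fin N → ℝ))
    (Ytil : Fin K → Fin N → ℝ) (hYtilMem : ∀ i, Ytil i ∈ Y)
    (hYtilGal : ∀ i, ∀ v ∈ Y, v ⬝ᵥ Aᵀ.mulVec (Ytil i) = v ⬝ᵥ Z i)
    (etil : Fin N → ℝ) (hetilMem : etil ∈ Y)
    (hetilGal : ∀ v ∈ Y, v ⬝ᵥ A.mulVec etil = v ⬝ᵥ r) :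
    (∀ i, Ytil i ⬝ᵥ r = Z i ⬝ᵥ etil) ∧
      Real.sqrt ((1 / K : ℝ) * ∑ i, (Ytil i ⬝ᵥ r) ^ 2)
        = Real.sqrt ((1 / K : ℝ) * ∑ i, (Z i ⬝ᵥ etil) ^ 2) := by
  have h : ∀ i, Ytil i ⬝ᵥ r = Z i ⬝ᵥ etil := by
    intro i
    rw [← hetilGal (Ytil i) (hYtilMem i), dotProduct_mulVec,
      ← Matrix.mulVec_transpose, dotProduct_comm,
      hYtilGal i etil hetilMem, dotProduct_comm]
  exact ⟨h, by simp only [h]⟩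
end
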